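/- arXiv:2206.15092 — 4 statements merged into one kernel-verified Lean document; each statement's English description precedes it below -/
import Mathlib

section
/- For every positive integer q, a graph G is K_{2,q}-induced-minor-free if and only if every minimal separator S of G induces a subgraph G[S] with independence number strictly less than q. -/
open SimpleGraph

/-! ## Common definitions -/

variable {V : Type} {W : Type}

/-- `G.HasInducedMinor H` : `H` is an induced minor of `G`, witnessed by an induced minor
model: pairwise disjoint nonempty connected branch sets `X w ⊆ V(G)` such that for distinct
`w₁ w₂` there is an edge of `G` between `X w₁` and `X w₂` iff `w₁w₂ ∈ E(H)`. -/
def SimpleGraph.HasInducedMinor (G : SimpleGraph V) (H : SimpleGraph W) : Prop :=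
  ∃ X : W → Set V,
    (∀ w, (G.induce (X w)).Connected) ∧
    (Pairwise fun w₁ w₂ => Disjoint (X w₁) (X w₂)) ∧
    ∀ w₁ w₂, w₁ ≠ w₂ →
      (H.Adj w₁ w₂ ↔ ∃ v₁ ∈ X w₁, ∃ v₂ ∈ X w₂, G.Adj v₁ v₂)

/-- `G.HasMinor H` : `H` is a minor of `G`, witnessed by a minor model. -/
def SimpleGraph.HasMinor (G : SimpleGraph V) (H : SimpleGraph W) : Prop :=
  ∃ X : W → Set V,
    (∀ w, (G.induce (X w)).Connected) ∧
    (Pairwise fun w₁ w₂ => Disjoint (X w₁) (X w₂)) ∧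
    ∀ w₁ w₂, H.Adj w₁ w₂ → ∃ v₁ ∈ X w₁, ∃ v₂ ∈ X w₂, G.Adj v₁ v₂

/-- `S` is a `u,v`-separator in `G` : `u, v ∉ S` and every walk from `u` to `v` in `G`
meets `S` (i.e. `u` and `v` lie in different components of `G - S`). -/
def SimpleGraph.IsSeparator (G : SimpleGraph V) (u v : V) (S : Set V) : Prop :=
  u ∉ S ∧ v ∉ S ∧ ∀ p : G.Walk u v, ∃ x ∈ p.support, x ∈ S

/-- A minimal separator of `G`: an inclusion-minimal `u,v`-separator for some
non-adjacent pair of distinct vertices `u, v`. -/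
def SimpleGraph.IsMinimalSeparator (G : SimpleGraph V) (S : Set V) : Prop :=
  ∃ u v : V, u ≠ v ∧ ¬ G.Adj u v ∧ G.IsSeparator u v S ∧
    ∀ S' ⊂ S, ¬ G.IsSeparator u v S'

/-- The independence number of the subgraph of `G` induced by the set `A`:
the largest size of a finite set of pairwise non-adjacent vertices inside `A`. -/
noncomputable def SimpleGraph.indepNumOn (G : SimpleGraph V) (A : Set V) : ℕ :=
  sSup {n | ∃ s : Finset V, ↑s ⊆ A ∧ (∀ u ∈ s, ∀ v ∈ s, u ≠ v → ¬ G.Adj u v) ∧ s.card = n}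

/-- A tree decomposition of a graph `G`. -/
structure SimpleGraph.TreeDecomp (G : SimpleGraph V) where
  ι : Type
  tree : SimpleGraph ι
  isTree : tree.IsTree
  bag : ι → Set V
  bags_cover_vertices : ∀ v : V, ∃ t, v ∈ bag t
  bags_cover_edges : ∀ ⦃u v : V⦄, G.Adj u v → ∃ t, u ∈ bag t ∧ v ∈ bag t
  bags_connected : ∀ v : V, (tree.induce {t | v ∈ bag t}).Connected

/-- The independence number of a tree decomposition: the maximum, over all bags,
of the independence number of the subgraph induced by the bag. -/
noncomputable def SimpleGraph.TreeDecomp.indepNum {G : SimpleGraph V} (D : G.TreeDecomp) : ℕ∞ :=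
  ⨆ t : D.ι, (G.indepNumOn (D.bag t) : ℕ∞)

/-- The tree-independence number of `G`: the minimum independence number of
a tree decomposition of `G`. -/
noncomputable def SimpleGraph.treeIndepNum (G : SimpleGraph V) : ℕ∞ :=
  ⨅ D : G.TreeDecomp, D.indepNum

/-- The width of a tree decomposition: the maximum of `|X_t| - 1` over all bags. -/
noncomputable def SimpleGraph.TreeDecomp.width {G : SimpleGraph V} (D : G.TreeDecomp) : ℕ∞ :=
  ⨆ t : D.ι, (((D.bag t).ncard - 1 : ℕ) : ℕ∞)

/-- The treewidth of `G`. -/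
noncomputable def SimpleGraph.treewidth (G : SimpleGraph V) : ℕ∞ :=
  ⨅ D : G.TreeDecomp, D.width

/-- A graph is chordal if it has no induced cycle of length at least `4`. -/
def SimpleGraph.IsChordal (G : SimpleGraph V) : Prop :=
  ∀ n : ℕ, 4 ≤ n → ∀ A : Set V, ¬ Nonempty (cycleGraph n ≃g G.induce A)

/-- `H` is a minimal triangulation of `G`: a chordal supergraph of `G` on the same
vertex set such that no chordal graph lies strictly between `G` and `H`. -/
def SimpleGraph.IsMinimalTriangulation (G H : SimpleGraph V) : Prop :=
  G ≤ H ∧ H.IsChordal ∧ ∀ H' : SimpleGraph V, G ≤ H' → H'.IsChordal → ¬ H' < H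

/-- `X` is a potential maximal clique of `G`: a maximal clique in some
minimal triangulation of `G`. -/
def SimpleGraph.IsPotentialMaxClique (G : SimpleGraph V) (X : Set V) : Prop :=
  ∃ H : SimpleGraph V, G.IsMinimalTriangulation H ∧
    H.IsClique X ∧ ∀ Y : Set V, H.IsClique Y → X ⊆ Y → Y = X

/-- The pmc-independence number of `G`: the maximum independence number of a subgraph
of `G` induced by a potential maximal clique of `G`. -/
noncomputable def SimpleGraph.pmcIndepNum (G : SimpleGraph V) : ℕ :=
  sSup {n | ∃ X : Set V, G.IsPotentialMaxClique X ∧ n = G.indepNumOn X}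

/-- The maximum size of a minimal separator of `G` (`0` if `G` has no minimal separator). -/
noncomputable def SimpleGraph.maxMinimalSeparatorSize (G : SimpleGraph V) : ℕ :=
  sSup {n | ∃ S : Set V, G.IsMinimalSeparator S ∧ n = S.ncard}

/-- `G` is `k`-connected: `G` has at least `k+1` vertices and removing any set of fewer
than `k` vertices leaves a connected graph. -/
def SimpleGraph.IsKConnected (G : SimpleGraph V) [Fintype V] (k : ℕ) : Prop :=
  k + 1 ≤ Fintype.card V ∧
    ∀ X : Finset V, X.card < k → (G.induce ((↑X : Set V)ᶜ)).Connected

/-- The `n`-wheel `W_n`: the cycle `C_n` together with a universal vertex. -/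
def wheelGraph (n : ℕ) : SimpleGraph (Option (Fin n)) :=
  SimpleGraph.fromRel (fun a b =>
    a = none ∨ ∃ i j : Fin n, a = some i ∧ b = some j ∧ (cycleGraph n).Adj i j)

/-- `K₅⁻`: the complete graph on `5` vertices minus an edge. -/
def K5minus : SimpleGraph (Fin 5) := (completeGraph (Fin 5)).deleteEdges {s(0, 1)}

/-- The complete bipartite graph `K_{2,q}`. -/
abbrev K2q (q : ℕ) : SimpleGraph (Fin 2 ⊕ Fin q) := completeBipartiteGraph (Fin 2) (Fin q)

/-- The Hadwiger number of `G`: the largest `p` such that `K_p` is a minor of `G`. -/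
noncomputable def SimpleGraph.hadwigerNumber (G : SimpleGraph V) : ℕ :=
  sSup {p | G.HasMinor (completeGraph (Fin p))}

/-! ## Auxiliary machinery for Statement 0 -/

namespace K2qIMAux

open SimpleGraph Walk

variable {V : Type} {G : SimpleGraph V}

lemma reachable_induce {A : Set V} {a b : V} (p : G.Walk a b) :
    (∀ x ∈ p.support, x ∈ A) → ∀ (ha : a ∈ A) (hb : b ∈ A),
      (G.induce A).Reachable ⟨a, ha⟩ ⟨b, hb⟩ := by
  induction p with
  | nil => intro _ ha hb; exact Reachable.refl _
  | @cons u c b h q ih =>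
    intro hs ha hb
    have hc : c ∈ A := hs c (by simp)
    have hadj : (G.induce A).Adj ⟨u, ha⟩ ⟨c, hc⟩ := by simpa using h
    exact hadj.reachable.trans (ih (fun x hx => hs x (by simp [hx])) hc hb)

lemma exists_walk_of_induce_reachable {A : Set V} {x y : ↥A}
    (h : (G.induce A).Reachable x y) :
    ∃ p : G.Walk x.1 y.1, ∀ z ∈ p.support, z ∈ A := by
  obtain ⟨q⟩ := h
  refine ⟨q.map ⟨Subtype.val, fun hadj => by simpa using hadj⟩, ?_⟩
  intro z hz
  rw [Walk.support_map] at hz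
  obtain ⟨⟨w, hw⟩, -, rfl⟩ := List.mem_map.mp hz
  exact hw

lemma walk_stay {A B : Set V} (hd : Disjoint A B)
    (hne : ∀ x ∈ A, ∀ y ∈ B, ¬ G.Adj x y) {u v : V} (p : G.Walk u v) :
    (∀ x ∈ p.support, x ∈ A ∪ B) → u ∈ A → v ∈ A := by
  induction p with
  | nil => intro _ hu; exact hu
  | @cons u c b h q ih =>
    intro hs hu
    have hc : c ∈ A ∪ B := hs c (by simp)
    rcases hc with hc | hc
    · exact ih (fun x hx => hs x (by simp [hx])) hc
    · exact absurd h (hne u hu c hc)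

/-- The set of vertices reachable from `u` by walks avoiding `S`. -/
def comp (G : SimpleGraph V) (u : V) (S : Set V) : Set V :=
  {x | ∃ p : G.Walk u x, ∀ y ∈ p.support, y ∉ S}

lemma mem_comp_self {u : V} {S : Set V} (hu : u ∉ S) : u ∈ comp G u S :=
  ⟨Walk.nil, by simp [hu]⟩

lemma comp_not_mem_S {u x : V} {S : Set V} (hx : x ∈ comp G u S) : x ∉ S := by
  obtain ⟨p, hp⟩ := hx
  exact hp x p.end_mem_support

lemma comp_induce_connected {u : V} {S : Set V} (hu : u ∉ S) :
    (G.induce (comp G u S)).Connected := by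
  classical
  rw [connected_iff]
  have hmemu : u ∈ comp G u S := mem_comp_self hu
  have key : ∀ x : ↥(comp G u S), (G.induce (comp G u S)).Reachable ⟨u, hmemu⟩ x := by
    rintro ⟨x, hx⟩
    obtain ⟨p, hp⟩ := hx
    refine reachable_induce p ?_ hmemu ⟨p, hp⟩
    intro z hz
    exact ⟨p.takeUntil z hz, fun y hy => hp y (p.support_takeUntil_subset hz hy)⟩
  exact ⟨fun x y => (key x).symm.trans (key y), ⟨⟨u, hmemu⟩⟩⟩

lemma sep_symm {u v : V} {S : Set V} (h : G.IsSeparator u v S) :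
    G.IsSeparator v u S := by
  obtain ⟨h1, h2, h3⟩ := h
  refine ⟨h2, h1, fun p => ?_⟩
  obtain ⟨x, hx, hxS⟩ := h3 p.reverse
  exact ⟨x, by simpa using hx, hxS⟩

lemma comp_not_adj {u v : V} {S : Set V} (hsep : G.IsSeparator u v S) :
    ∀ x ∈ comp G u S, ∀ y ∈ comp G v S, ¬ G.Adj x y := by
  rintro x ⟨p, hp⟩ y ⟨q, hq⟩ hadj
  obtain ⟨z, hz, hzS⟩ := hsep.2.2 ((p.concat hadj).append q.reverse)
  rw [Walk.mem_support_append_iff] at hz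
  rcases hz with hz | hz
  · rw [Walk.support_concat, List.mem_append] at hz
    rcases hz with hz | hz
    · exact hp z hz hzS
    · simp only [List.mem_singleton] at hz
      subst hz; exact hq z q.end_mem_support hzS
  · rw [Walk.support_reverse, List.mem_reverse] at hz
    exact hq z hz hzS

lemma comp_disjoint {u v : V} {S : Set V} (hsep : G.IsSeparator u v S) :
    Disjoint (comp G u S) (comp G v S) := by
  rw [Set.disjoint_left]
  rintro x ⟨p, hp⟩ ⟨q, hq⟩
  obtain ⟨z, hz, hzS⟩ := hsep.2.2 (p.append q.reverse)
  rw [Walk.mem_support_append_iff] at hz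
  rcases hz with hz | hz
  · exact hp z hz hzS
  · rw [Walk.support_reverse, List.mem_reverse] at hz
    exact hq z hz hzS

lemma sep_nbr {u v : V} {S : Set V} (hsep : G.IsSeparator u v S) {s : V}
    (hs : s ∈ S) (hns : ¬ G.IsSeparator u v (S \ {s})) :
    ∃ y ∈ comp G u S, G.Adj s y := by
  classical
  obtain ⟨huS, hvS, hw⟩ := hsep
  unfold SimpleGraph.IsSeparator at hns
  push_neg at hns
  obtain ⟨p, hp⟩ := hns (fun h => huS h.1) (fun h => hvS h.1)
  have hsp : s ∈ p.support := by
    obtain ⟨x, hx1, hx2⟩ := hw p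
    have hxs : x = s := by
      by_contra hne
      exact hp x hx1 ⟨hx2, hne⟩
    exact hxs ▸ hx1
  have hq1 : ∀ x ∈ (p.takeUntil s hsp).support, x ∉ S \ {s} :=
    fun x hx => hp x (p.support_takeUntil_subset hsp hx)
  have hcount : (p.takeUntil s hsp).support.count s = 1 :=
    p.count_support_takeUntil_eq_one hsp
  have hsu : s ≠ u := fun h => huS (h ▸ hs)
  obtain ⟨y, hadj, r, hr⟩ := Walk.exists_eq_cons_of_ne hsu (p.takeUntil s hsp).reverse
  have hsupp : (p.takeUntil s hsp).support.reverse = s :: r.support := by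
    rw [← Walk.support_reverse, hr, Walk.support_cons]
  have hsr : s ∉ r.support := by
    have h1 := hcount
    rw [← List.count_reverse, hsupp] at h1
    simp only [List.count_cons_self] at h1
    exact List.count_eq_zero.mp (by omega)
  have hrS : ∀ x ∈ r.support, x ∉ S := by
    intro x hx hxS
    have hxmem : x ∈ (p.takeUntil s hsp).support := by
      rw [← List.mem_reverse, hsupp]; exact List.mem_cons_of_mem _ hx
    have hne : x ≠ s := fun h => hsr (h ▸ hx)
    exact hq1 x hxmem ⟨hxS, hne⟩
  refine ⟨y, ⟨r.reverse, ?_⟩, hadj⟩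
  intro z hz
  rw [Walk.support_reverse, List.mem_reverse] at hz
  exact hrS z hz

lemma induce_singleton_connected (G : SimpleGraph V) (x : V) :
    (G.induce ({x} : Set V)).Connected := by
  rw [connected_iff]
  refine ⟨?_, ⟨⟨x, rfl⟩⟩⟩
  rintro ⟨a, ha⟩ ⟨b, hb⟩
  simp only [Set.mem_singleton_iff] at ha hb
  subst ha; subst hb
  exact Reachable.refl _

lemma indepNumOn_bddAbove [Fintype V] (G : SimpleGraph V) (A : Set V) :
    BddAbove {n | ∃ s : Finset V, ↑s ⊆ A ∧
      (∀ u ∈ s, ∀ v ∈ s, u ≠ v → ¬ G.Adj u v) ∧ s.card = n} := by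
  refine ⟨Fintype.card V, ?_⟩
  rintro n ⟨s, -, -, rfl⟩
  exact s.card_le_univ

lemma L1 [Fintype V] {q : ℕ} {S : Set V} (hS : G.IsMinimalSeparator S)
    (hq : q ≤ G.indepNumOn S) : G.HasInducedMinor (K2q q) := by
  classical
  obtain ⟨u, v, huv, hnadj, hsep, hmin⟩ := hS
  unfold SimpleGraph.indepNumOn at hq
  have hbdd := indepNumOn_bddAbove G S
  have hne0 : {n | ∃ s : Finset V, ↑s ⊆ S ∧
      (∀ u ∈ s, ∀ v ∈ s, u ≠ v → ¬ G.Adj u v) ∧ s.card = n}.Nonempty :=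
    ⟨0, ∅, by simp⟩
  obtain ⟨t0, ht0S, ht0i, ht0c⟩ := Nat.sSup_mem hne0 hbdd
  have hq' : q ≤ t0.card := by rw [ht0c]; exact hq
  obtain ⟨t, hts, htc⟩ := Finset.exists_subset_card_eq hq'
  have htS : ↑t ⊆ S := fun x hx => ht0S (hts hx)
  have hti : ∀ a ∈ t, ∀ b ∈ t, a ≠ b → ¬ G.Adj a b :=
    fun a ha b hb => ht0i a (hts ha) b (hts hb)
  let σ : Fin q ≃ ↥t := (t.equivFin.trans (finCongr htc)).symm
  have nbrU : ∀ s ∈ S, ∃ y ∈ comp G u S, G.Adj s y := fun s hs =>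
    sep_nbr hsep hs (hmin _ (Set.sdiff_singleton_ssubset.mpr hs))
  have nbrV : ∀ s ∈ S, ∃ y ∈ comp G v S, G.Adj s y := fun s hs =>
    sep_nbr (sep_symm hsep) hs
      (fun h => hmin _ (Set.sdiff_singleton_ssubset.mpr hs) (sep_symm h))
  have huS : u ∉ S := hsep.1
  have hvS : v ∉ S := hsep.2.1
  have hσS : ∀ j : Fin q, (σ j : V) ∈ S := fun j => htS (σ j).2
  refine ⟨Sum.elim (![comp G u S, comp G v S]) (fun j => {(σ j : V)}), ?_, ?_, ?_⟩
  · rintro (i | j)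
    · fin_cases i
      · exact comp_induce_connected huS
      · exact comp_induce_connected hvS
    · exact induce_singleton_connected G _
  · have hdis1 : ∀ (w : V), w ∉ S → ∀ j : Fin q,
        Disjoint (comp G w S) ({(σ j : V)} : Set V) := by
      intro w hw j
      rw [Set.disjoint_singleton_right]
      exact fun h => comp_not_mem_S h (hσS j)
    rintro (i | i) (j | j) hne
    · have hij : i ≠ j := fun h => hne (by rw [h])
      fin_cases i <;> fin_cases j
      · exact absurd rfl hij
      · simpa using comp_disjoint hsep
      · simpa using (comp_disjoint hsep).symm
      · exact absurd rfl hij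
    · fin_cases i
      · simpa using hdis1 u huS j
      · simpa using hdis1 v hvS j
    · fin_cases j
      · simpa using (hdis1 u huS i).symm
      · simpa using (hdis1 v hvS i).symm
    · have hij : i ≠ j := fun h => hne (by rw [h])
      have hv : (σ i : V) ≠ (σ j : V) := by
        intro h
        exact hij (σ.injective (Subtype.ext h))
      simpa [Set.disjoint_singleton] using hv
  · rintro (i | i) (j | j) hne
    · have hij : i ≠ j := fun h => hne (by rw [h])
      refine iff_of_false (by simp [completeBipartiteGraph]) ?_
      rintro ⟨a, ha, b, hb, hadj⟩
      fin_cases i <;> fin_cases j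
      · exact absurd rfl hij
      · simp only [Sum.elim_inl, Matrix.cons_val_zero, Matrix.cons_val_one,
          Matrix.head_cons] at ha hb
        exact comp_not_adj hsep a ha b hb hadj
      · simp only [Sum.elim_inl, Matrix.cons_val_zero, Matrix.cons_val_one,
          Matrix.head_cons] at ha hb
        exact comp_not_adj hsep b hb a ha hadj.symm
      · exact absurd rfl hij
    · refine iff_of_true (by simp [completeBipartiteGraph]) ?_
      fin_cases i
      · obtain ⟨y, hy, hadj⟩ := nbrU (σ j) (hσS j)
        exact ⟨y, by simpa using hy, σ j, by simp, hadj.symm⟩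
      · obtain ⟨y, hy, hadj⟩ := nbrV (σ j) (hσS j)
        exact ⟨y, by simpa using hy, σ j, by simp, hadj.symm⟩
    · refine iff_of_true (by simp [completeBipartiteGraph]) ?_
      fin_cases j
      · obtain ⟨y, hy, hadj⟩ := nbrU (σ i) (hσS i)
        exact ⟨σ i, by simp, y, by simpa using hy, hadj⟩
      · obtain ⟨y, hy, hadj⟩ := nbrV (σ i) (hσS i)
        exact ⟨σ i, by simp, y, by simpa using hy, hadj⟩
    · have hij : i ≠ j := fun h => hne (by rw [h])
      refine iff_of_false (by simp [completeBipartiteGraph]) ?_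
      rintro ⟨a, ha, b, hb, hadj⟩
      simp only [Sum.elim_inr, Set.mem_singleton_iff] at ha hb
      subst ha; subst hb
      have hv : (σ i : V) ≠ (σ j : V) := by
        intro h
        exact hij (σ.injective (Subtype.ext h))
      exact hti _ (σ i).2 _ (σ j).2 hv hadj

lemma L2 [Fintype V] {q : ℕ} (h : G.HasInducedMinor (K2q q)) :
    ∃ S : Set V, G.IsMinimalSeparator S ∧ q ≤ G.indepNumOn S := by
  classical
  obtain ⟨X, hconn, hdisj, hadj⟩ := h
  set A := X (Sum.inl 0) with hA
  set B := X (Sum.inl 1) with hB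
  have h01 : (Sum.inl 0 : Fin 2 ⊕ Fin q) ≠ Sum.inl 1 := by simp
  have hABd : Disjoint A B := hdisj h01
  have hABne : ∀ a ∈ A, ∀ b ∈ B, ¬ G.Adj a b := by
    intro a ha b hb hadj'
    have := (hadj _ _ h01).mpr ⟨a, ha, b, hb, hadj'⟩
    simpa [completeBipartiteGraph] using this
  obtain ⟨⟨u, huA⟩⟩ := (hconn (Sum.inl 0)).nonempty
  obtain ⟨⟨v, hvB⟩⟩ := (hconn (Sum.inl 1)).nonempty
  have huv : u ≠ v := fun h => Set.disjoint_left.mp hABd huA (h ▸ hvB)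
  have hnadj : ¬ G.Adj u v := hABne u huA v hvB
  have hsep0 : G.IsSeparator u v ((A ∪ B)ᶜ) := by
    refine ⟨Set.notMem_compl_iff.mpr (Or.inl huA), Set.notMem_compl_iff.mpr (Or.inr hvB), ?_⟩
    intro p
    by_contra hc
    push_neg at hc
    have hvA : v ∈ A := walk_stay hABd hABne p
      (fun x hx => by have := hc x hx; rwa [Set.notMem_compl_iff] at this) huA
    exact Set.disjoint_left.mp hABd hvA hvB
  set N := {n | ∃ T : Finset V, ↑T ⊆ ((A ∪ B)ᶜ : Set V) ∧
    G.IsSeparator u v ↑T ∧ T.card = n} with hNdef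
  have hNne : N.Nonempty := by
    refine ⟨_, (Set.toFinite ((A ∪ B)ᶜ)).toFinset, ?_, ?_, rfl⟩
    · rw [Set.Finite.coe_toFinset]
    · rw [Set.Finite.coe_toFinset]; exact hsep0
  obtain ⟨T, hTsub, hTsep, hTcard⟩ := Nat.sInf_mem hNne
  have hminsep : G.IsMinimalSeparator (↑T : Set V) := by
    refine ⟨u, v, huv, hnadj, hTsep, ?_⟩
    intro S' hss hsepS'
    have hfin : S'.Finite := Set.toFinite S'
    have hss' : hfin.toFinset ⊂ T := by
      rw [← Finset.coe_ssubset, Set.Finite.coe_toFinset]; exact hss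
    have hmem' : hfin.toFinset.card ∈ N := by
      refine ⟨hfin.toFinset, ?_, ?_, rfl⟩
      · rw [Set.Finite.coe_toFinset]
        exact fun x hx => hTsub (hss.subset hx)
      · rw [Set.Finite.coe_toFinset]; exact hsepS'
    have h1 := Nat.sInf_le hmem'
    have h2 := Finset.card_lt_card hss'
    omega
  have hmeet : ∀ j : Fin q, ∃ x, x ∈ (↑T : Set V) ∩ X (Sum.inr j) := by
    intro j
    by_contra hemp
    push_neg at hemp
    have hTY : ∀ x ∈ (↑T : Set V), x ∉ X (Sum.inr j) := fun x hx hx' =>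
      (hemp x) ⟨hx, hx'⟩
    obtain ⟨a, haA, y, hyY, hay⟩ :=
      (hadj (Sum.inl 0) (Sum.inr j) (by simp)).mp (by simp [completeBipartiteGraph])
    obtain ⟨b, hbB, y', hy'Y, hby'⟩ :=
      (hadj (Sum.inl 1) (Sum.inr j) (by simp)).mp (by simp [completeBipartiteGraph])
    obtain ⟨p1, hp1⟩ := exists_walk_of_induce_reachable
      ((hconn (Sum.inl 0)).preconnected ⟨u, huA⟩ ⟨a, haA⟩)
    obtain ⟨p2, hp2⟩ := exists_walk_of_induce_reachable
      ((hconn (Sum.inr j)).preconnected ⟨y, hyY⟩ ⟨y', hy'Y⟩)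
    obtain ⟨p3, hp3⟩ := exists_walk_of_induce_reachable
      ((hconn (Sum.inl 1)).preconnected ⟨b, hbB⟩ ⟨v, hvB⟩)
    obtain ⟨z, hz, hzT⟩ := hTsep.2.2
      (p1.append (Walk.cons hay (p2.append (Walk.cons hby'.symm p3))))
    have hz' : z ∉ A ∪ B := hTsub hzT
    simp only [Walk.mem_support_append_iff, Walk.support_cons, List.mem_cons] at hz
    rcases hz with hz | hz
    · exact hz' (Or.inl (hp1 z hz))
    rcases hz with rfl | hz
    · exact hz' (Or.inl haA)
    rcases hz with hz | hz
    · exact hTY z hzT (hp2 z hz)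
    rcases hz with rfl | hz
    · exact hTY _ hzT hy'Y
    · exact hz' (Or.inr (hp3 z hz))
  choose f hf using hmeet
  have hfT : ∀ j, f j ∈ (↑T : Set V) := fun j => (hf j).1
  have hfY : ∀ j, f j ∈ X (Sum.inr j) := fun j => (hf j).2
  have hfinj : Function.Injective f := by
    intro i j hij
    by_contra hne
    have hne' : (Sum.inr i : Fin 2 ⊕ Fin q) ≠ Sum.inr j := by simp [hne]
    exact Set.disjoint_left.mp (hdisj hne') (hfY i) (hij ▸ hfY j)
  have hfnadj : ∀ i j : Fin q, i ≠ j → ¬ G.Adj (f i) (f j) := by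
    intro i j hij hadj'
    have hne' : (Sum.inr i : Fin 2 ⊕ Fin q) ≠ Sum.inr j := by simp [hij]
    have := (hadj _ _ hne').mpr ⟨f i, hfY i, f j, hfY j, hadj'⟩
    simpa [completeBipartiteGraph] using this
  refine ⟨↑T, hminsep, ?_⟩
  unfold SimpleGraph.indepNumOn
  refine le_csSup (indepNumOn_bddAbove G _) ?_
  refine ⟨Finset.univ.image f, ?_, ?_, ?_⟩
  · intro x hx
    simp only [Finset.coe_image] at hx
    obtain ⟨j, -, rfl⟩ := hx
    exact hfT j
  · intro a ha b hb hab hadj'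
    simp only [Finset.mem_image] at ha hb
    obtain ⟨i, -, rfl⟩ := ha
    obtain ⟨j, -, rfl⟩ := hb
    exact hfnadj i j (fun h => hab (by rw [h])) hadj'
  · rw [Finset.card_image_of_injective _ hfinj, Finset.card_univ, Fintype.card_fin]

end K2qIMAux

/-- For every positive integer `q`, a graph `G` is
`K_{2,q}`-induced-minor-free iff every minimal separator of `G` induces a subgraph
with independence number strictly less than `q`. -/
theorem k2q_inducedMinorFree_iff_minimalSeparator_indepNumOn_lt
    {V : Type} [Fintype V] (q : ℕ) (hq : 1 ≤ q) (G : SimpleGraph V) :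
    ¬ G.HasInducedMinor (K2q q) ↔
      ∀ S : Set V, G.IsMinimalSeparator S → G.indepNumOn S < q := by
  constructor
  · intro h S hS
    by_contra hge
    push_neg at hge
    exact h (K2qIMAux.L1 hS hge)
  · intro h him
    obtain ⟨S, hS, hq'⟩ := K2qIMAux.L2 him
    have := h S hS
    omega
end

section
/- Let G be a graph and let X be a potential maximal clique of G. Then either X is a clique in G, or there exist two minimal separators S and T of G such that X ⊆ S ∪ T. -/
open SimpleGraph

/-! ## Common definitions -/

variable {V : Type} {W : Type}

namespace PMC

open Fin.NatCast Fin.CommRing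

variable {V : Type} (G : SimpleGraph V)

/-- Reachability by a walk avoiding `Z`. -/
def AReach (Z : Set V) (a b : V) : Prop :=
  ∃ w : G.Walk a b, ∀ x ∈ w.support, x ∉ Z

variable {G}

namespace AReach

variable {Z : Set V} {a b c : V}

theorem refl (ha : a ∉ Z) : AReach G Z a a :=
  ⟨Walk.nil, by simp [ha]⟩

theorem symm (h : AReach G Z a b) : AReach G Z b a := by
  obtain ⟨w, hw⟩ := h
  exact ⟨w.reverse, by simpa using hw⟩

theorem trans (h : AReach G Z a b) (h' : AReach G Z b c) : AReach G Z a c := by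
  obtain ⟨w, hw⟩ := h
  obtain ⟨w', hw'⟩ := h'
  refine ⟨w.append w', fun x hx => ?_⟩
  rcases (by simpa [Walk.support_append] using hx : x ∈ w.support ∨ x ∈ w'.support.tail) with h | h
  · exact hw x h
  · exact hw' x (List.mem_of_mem_tail h)

theorem left_not_mem (h : AReach G Z a b) : a ∉ Z := by
  obtain ⟨w, hw⟩ := h; exact hw a w.start_mem_support

theorem right_not_mem (h : AReach G Z a b) : b ∉ Z := by
  obtain ⟨w, hw⟩ := h; exact hw b w.end_mem_support

theorem step (h : AReach G Z a b) (hadj : G.Adj b c) (hc : c ∉ Z) : AReach G Z a c :=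
  h.trans ⟨hadj.toWalk, by
    intro x hx
    rcases (by simpa using hx) with rfl | rfl
    · exact h.right_not_mem
    · exact hc⟩

theorem of_adj (hadj : G.Adj a b) (ha : a ∉ Z) (hb : b ∉ Z) : AReach G Z a b :=
  (AReach.refl ha).step hadj hb

theorem mono {Z' : Set V} (hZ : Z' ⊆ Z) (h : AReach G Z a b) : AReach G Z' a b := by
  obtain ⟨w, hw⟩ := h
  exact ⟨w, fun x hx hxz => hw x hx (hZ hxz)⟩

end AReach

variable (G)

/-- The set of vertices reachable from `w` avoiding `Z` (the "component" of `w` in `G - Z`). -/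
def comp (Z : Set V) (w : V) : Set V := {z | AReach G Z w z}

/-- Outer neighborhood of a set. -/
def nbr (M : Set V) : Set V := {y | y ∉ M ∧ ∃ a ∈ M, G.Adj a y}

variable {G}

theorem comp_subset_compl {Z : Set V} {w : V} : comp G Z w ⊆ Zᶜ := fun _ h => h.right_not_mem

theorem mem_comp_self {Z : Set V} {w : V} (h : w ∉ Z) : w ∈ comp G Z w := AReach.refl h

theorem comp_eq_of_mem {Z : Set V} {w w' : V} (h : w' ∈ comp G Z w) :
    comp G Z w' = comp G Z w := by
  ext z; exact ⟨fun hz => (h : AReach G Z w w').trans hz, fun hz => (h.symm).trans hz⟩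

/-- If a vertex outside `Z` is adjacent to the component, it is in the component. -/
theorem mem_comp_of_adj {Z : Set V} {w c y : V} (hc : c ∈ comp G Z w) (hadj : G.Adj c y)
    (hy : y ∉ Z) : y ∈ comp G Z w := AReach.step (hc : AReach G Z w c) hadj hy

/-- Neighbors of a component that are not in it lie in `Z`. -/
theorem nbr_comp_subset {Z : Set V} {w : V} : nbr G (comp G Z w) ⊆ Z := by
  rintro y ⟨hy, c, hc, hadj⟩
  by_contra hyZ
  exact hy (mem_comp_of_adj hc hadj hyZ)

theorem mem_nbr {M : Set V} {y : V} : y ∈ nbr G M ↔ y ∉ M ∧ ∃ a ∈ M, G.Adj a y := Iff.rfl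

/-- First entry lemma: a walk from outside `M` into `M` meets `nbr G M`. -/
theorem walk_meets_nbr {M : Set V} {a b : V} (w : G.Walk a b) (ha : a ∉ M) (hb : b ∈ M) :
    ∃ x ∈ w.support, x ∈ nbr G M := by
  induction w with
  | nil => exact absurd hb ha
  | @cons u v c hadj w ih =>
    by_cases hv : v ∈ M
    · exact ⟨u, by simp, ha, v, hv, hadj.symm⟩
    · obtain ⟨x, hx, hxn⟩ := ih hv hb
      exact ⟨x, by simp [hx], hxn⟩

/-- A walk all of whose vertices avoid `Z`, starting in `comp G Z w`, stays in it. -/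
theorem walk_stays_in_comp {Z : Set V} {w a b : V} (p : G.Walk a b)
    (hp : ∀ x ∈ p.support, x ∉ Z) (ha : a ∈ comp G Z w) : ∀ x ∈ p.support, x ∈ comp G Z w := by
  induction p with
  | nil => intro x hx; simp at hx; subst hx; exact ha
  | @cons u v c hadj p ih =>
    intro x hx
    have hv : v ∈ comp G Z w := mem_comp_of_adj ha hadj (hp v (by simp))
    rcases (by simpa using hx) with rfl | hx
    · exact ha
    · exact ih (fun y hy => hp y (by simp [hy])) hv x hx



section FinCycle

variable {n : ℕ} [NeZero n]

theorem val_one_of (hn : 4 ≤ n) : (1 : Fin n).val = 1 := by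
  have h2 := Fin.val_one' n
  rw [Nat.mod_eq_of_lt (by omega)] at h2
  exact h2

theorem cyc_adj_iff (hn : 4 ≤ n) {x y : Fin n} :
    (cycleGraph n).Adj x y ↔ x = 1 + y ∨ y = 1 + x := by
  rw [cycleGraph_adj']
  have h1 : ∀ z : Fin n, z.val = 1 ↔ z = 1 := by
    intro z; rw [Fin.ext_iff, val_one_of hn]
  rw [h1, h1, sub_eq_iff_eq_add, sub_eq_iff_eq_add]

theorem natCast_eq_zero_iff (hn : 4 ≤ n) {j : ℕ} (hj : j ≤ n) :
    ((j : Fin n) = 0) ↔ (j = 0 ∨ j = n) := by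
  rw [Fin.ext_iff, Fin.val_natCast, Fin.val_zero]
  rcases Nat.lt_or_ge j n with h | h
  · rw [Nat.mod_eq_of_lt h]; omega
  · have : j = n := by omega
    subst this; simp [Nat.mod_self]

theorem one_ne_zero' (hn : 4 ≤ n) : (1 : Fin n) ≠ 0 := by
  intro h
  rw [show (1 : Fin n) = ((1 : ℕ) : Fin n) by push_cast; ring] at h
  rw [natCast_eq_zero_iff hn (by omega)] at h
  omega

theorem two_ne_zero'' (hn : 4 ≤ n) : (2 : Fin n) ≠ 0 := by
  intro h
  rw [show (2 : Fin n) = ((2 : ℕ) : Fin n) by push_cast; ring] at h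
  rw [natCast_eq_zero_iff hn (by omega)] at h
  omega

theorem three_ne_zero'' (hn : 4 ≤ n) : (3 : Fin n) ≠ 0 := by
  intro h
  rw [show (3 : Fin n) = ((3 : ℕ) : Fin n) by push_cast; ring] at h
  rw [natCast_eq_zero_iff hn (by omega)] at h
  omega

theorem cyc_adj_succ (hn : 4 ≤ n) (i : Fin n) : (cycleGraph n).Adj i (i + 1) := by
  rw [cyc_adj_iff hn]; right; rw [add_comm]

/-- No triangles in a cycle graph on at least 4 vertices. -/
theorem cyc_no_triangle (hn : 4 ≤ n) {a b c : Fin n}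
    (hab : (cycleGraph n).Adj a b) (hac : (cycleGraph n).Adj a c)
    (hbc : (cycleGraph n).Adj b c) : False := by
  have hne_ab := hab.ne
  have hne_ac := hac.ne
  have hne_bc := hbc.ne
  rw [cyc_adj_iff hn] at hab hac hbc
  have hk1 : ∀ x : Fin n, x = 1 + x → False := by
    intro x hx
    exact one_ne_zero' hn (right_eq_add.mp hx)
  have hk3 : ∀ x : Fin n, x = 3 + x → False := by
    intro x hx
    exact three_ne_zero'' hn (right_eq_add.mp hx)
  rcases hab with hb | hb
  · subst hb
    rcases hac with hc | hc
    · exact hne_bc (add_left_cancel hc)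
    · subst hc
      rcases hbc with h | h
      · exact hk3 b (h.trans (by ring))
      · exact hk1 b (add_left_cancel h).symm
  · subst hb
    rcases hac with hc | hc
    · subst hc
      rcases hbc with h | h
      · exact hk1 c (add_left_cancel h).symm
      · exact hk3 c (h.trans (by ring))
    · rcases hbc with h | h
      · exact hne_ac (add_left_cancel h)
      · exact hk1 a (add_left_cancel (hc.symm.trans h))

end FinCycle


section Glue

variable {V : Type} (G H : SimpleGraph V) (Y : Set V)

/-- `H` with all edges removed that join two different components of `G - Y`. -/
def glueGraph : SimpleGraph V where
  Adj a b := H.Adj a b ∧ (a ∈ Y ∨ b ∈ Y ∨ AReach G Y a b)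
  symm := by
    constructor
    rintro a b ⟨h, h2⟩
    refine ⟨h.symm, ?_⟩
    rcases h2 with h2 | h2 | h2
    · exact Or.inr (Or.inl h2)
    · exact Or.inl h2
    · exact Or.inr (Or.inr h2.symm)
  loopless := ⟨fun a h => H.loopless.irrefl a h.1⟩

variable {G H Y}

theorem glueGraph_le : glueGraph G H Y ≤ H := fun _ _ h => h.1

theorem le_glueGraph (hGH : G ≤ H) : G ≤ glueGraph G H Y := by
  intro a b hab
  refine ⟨hGH hab, ?_⟩
  by_cases ha : a ∈ Y
  · exact Or.inl ha
  by_cases hb : b ∈ Y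
  · exact Or.inr (Or.inl hb)
  · exact Or.inr (Or.inr (AReach.of_adj hab ha hb))

theorem natCast_sub_one {n : ℕ} [NeZero n] (hn : 4 ≤ n) : ((n - 1 : ℕ) : Fin n) = -1 := by
  rw [Nat.cast_sub (by omega), Fin.natCast_self, Nat.cast_one]; ring

theorem natCast_sub_two {n : ℕ} [NeZero n] (hn : 4 ≤ n) : ((n - 2 : ℕ) : Fin n) = -2 := by
  rw [Nat.cast_sub (by omega), Fin.natCast_self]; push_cast; ring

theorem neg_one_val {n : ℕ} [NeZero n] (hn : 4 ≤ n) : ((-1 : Fin n)).val = n - 1 := by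
  rw [← natCast_sub_one hn, Fin.val_natCast, Nat.mod_eq_of_lt (by omega)]

theorem neg_two_val {n : ℕ} [NeZero n] (hn : 4 ≤ n) : ((-2 : Fin n)).val = n - 2 := by
  rw [← natCast_sub_two hn, Fin.val_natCast, Nat.mod_eq_of_lt (by omega)]

theorem glueGraph_isChordal (hch : H.IsChordal) (hY : H.IsClique Y) :
    (glueGraph G H Y).IsChordal := by
  intro n hn A hne
  obtain ⟨e⟩ := hne
  haveI : NeZero n := ⟨by omega⟩
  set g : Fin n → V := fun i => ((e i : ↑A) : V) with hg
  have hginj : Function.Injective g := fun i j h =>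
    e.toEquiv.injective (Subtype.val_injective h)
  have hAdj : ∀ i j : Fin n, (glueGraph G H Y).Adj (g i) (g j) ↔ (cycleGraph n).Adj i j := by
    intro i j
    exact e.map_rel_iff
  -- Case 1 : two non-consecutive positions on the cycle both mapping into Y
  by_cases hQ2 : ∃ i j : Fin n, g i ∈ Y ∧ g j ∈ Y ∧ i ≠ j ∧ ¬ (cycleGraph n).Adj i j
  · obtain ⟨i, j, hi, hj, hij, hnadj⟩ := hQ2
    exact hnadj ((hAdj i j).mp ⟨hY hi hj (fun h => hij (hginj h)), Or.inl hi⟩)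
  push_neg at hQ2
  -- Now derive that all the non-Y vertices of the cycle are in one component of G - Y.
  have hstep : ∀ i : Fin n, g i ∉ Y → g (i + 1) ∉ Y → AReach G Y (g i) (g (i + 1)) := by
    intro i h1 h2
    have h := (hAdj i (i + 1)).mpr (cyc_adj_succ hn i)
    rcases h.2 with h | h | h
    · exact absurd h h1
    · exact absurd h h2
    · exact h
  have key : ∀ (s : Fin n), g s ∉ Y → ∀ (m : ℕ), m < n →
      (∀ j : ℕ, 0 < j → j ≤ m → g (s + (j : Fin n)) ∉ Y) →
      AReach G Y (g s) (g (s + (m : Fin n))) := by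
    intro s hs m
    induction m with
    | zero => intro _ _; simpa using AReach.refl hs
    | succ k ih =>
      intro hk hall
      have h1 : AReach G Y (g s) (g (s + (k : Fin n))) :=
        ih (by omega) (fun j hj hj' => hall j hj (by omega))
      have heq : s + ((k + 1 : ℕ) : Fin n) = (s + (k : Fin n)) + 1 := by
        push_cast; ring
      have hk1 : g (s + ((k + 1 : ℕ) : Fin n)) ∉ Y := hall (k + 1) (by omega) le_rfl
      rw [heq] at hk1 ⊢
      have hkY : g (s + (k : Fin n)) ∉ Y := by
        rcases Nat.eq_zero_or_pos k with rfl | hpos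
        · simpa using hs
        · exact hall k hpos (by omega)
      exact h1.trans (hstep _ hkY hk1)
  -- Solve for the step index hitting a given vertex.
  have hsolve : ∀ (s t : Fin n) (j : ℕ), j < n → s + (j : Fin n) = t → j = (t - s).val := by
    intro s t j hj h
    have : (j : Fin n) = t - s := by rw [← h]; ring
    have := congrArg Fin.val this
    rwa [Fin.val_natCast, Nat.mod_eq_of_lt hj] at this
  have him : ∀ (s i : Fin n), s + (((i - s).val : ℕ) : Fin n) = i := by
    intro s i; rw [Fin.cast_val_eq_self]; ring
  -- Find an anchor from which every non-Y cycle vertex is reachable.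
  have anchor : ∃ s : Fin n, g s ∉ Y ∧ ∀ i : Fin n, g i ∉ Y → AReach G Y (g s) (g i) := by
    by_cases hQe : ∃ q : Fin n, g q ∈ Y
    · obtain ⟨q, hq⟩ := hQe
      by_cases hQ2e : ∃ q' : Fin n, g q' ∈ Y ∧ q' ≠ q
      · -- two (necessarily cyclically consecutive) Y-positions
        obtain ⟨q', hq', hne⟩ := hQ2e
        have hadj := hQ2 q' q hq' hq hne
        rw [cyc_adj_iff hn] at hadj
        -- qlo, qlo+1 are the Y positions
        obtain ⟨qlo, hqlo, hqlo1⟩ : ∃ qlo : Fin n, g qlo ∈ Y ∧ g (qlo + 1) ∈ Y := by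
          rcases hadj with h | h
          · exact ⟨q, hq, by rw [← add_comm 1 q, ← h]; exact hq'⟩
          · exact ⟨q', hq', by rw [← add_comm 1 q', ← h]; exact hq⟩
        have hchar : ∀ x : Fin n, g x ∈ Y → x = qlo ∨ x = qlo + 1 := by
          intro x hx
          by_contra hcon
          push_neg at hcon
          obtain ⟨h1, h2⟩ := hcon
          have ha1 := hQ2 x qlo hx hqlo h1
          have ha2 := hQ2 x (qlo + 1) hx hqlo1 h2
          have ha3 : (cycleGraph n).Adj qlo (qlo + 1) := cyc_adj_succ hn qlo
          exact cyc_no_triangle hn ha1 ha2 ha3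
        refine ⟨qlo + 2, ?_, ?_⟩
        · intro h
          rcases hchar _ h with h' | h'
          · exact two_ne_zero'' hn (add_eq_left.mp h')
          · have h2 : (2 : Fin n) = 1 := add_left_cancel h'
            have h3 : (1 : Fin n) + 1 = 1 := by
              rw [one_add_one_eq_two]; exact h2
            exact one_ne_zero' hn (add_eq_right.mp h3)
        · intro i hi
          have hkey := key (qlo + 2) ?_ (i - (qlo + 2)).val (Fin.is_lt _) ?_
          · rwa [him (qlo + 2) i] at hkey
          · intro h
            rcases hchar _ h with h' | h'
            · exact two_ne_zero'' hn (add_eq_left.mp h')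
            · have h2 : (2 : Fin n) = 1 := add_left_cancel h'
              have h3 : (1 : Fin n) + 1 = 1 := by rw [one_add_one_eq_two]; exact h2
              exact one_ne_zero' hn (add_eq_right.mp h3)
          · intro j hj0 hjle
            by_contra hYj
            have hmlt : (i - (qlo + 2)).val < n := Fin.is_lt _
            rcases hchar _ hYj with h | h
            · have hj' : j = ((qlo - (qlo + 2) : Fin n)).val :=
                hsolve _ _ j (by omega) h
              rw [show qlo - (qlo + 2) = -2 by ring, neg_two_val hn] at hj'
              rcases (by omega : (i - (qlo + 2)).val = n - 2 ∨ (i - (qlo + 2)).val = n - 1)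
                with hm | hm
              · have hiq : i = qlo := by
                  rw [← him (qlo + 2) i, hm, show (n - 2 : ℕ) = j by omega]
                  exact h
                exact hi (hiq ▸ hqlo)
              · have hiq : i = qlo + 1 := by
                  rw [← him (qlo + 2) i, hm, natCast_sub_one hn]; ring
                exact hi (hiq ▸ hqlo1)
            · have hj' : j = ((qlo + 1 - (qlo + 2) : Fin n)).val :=
                hsolve _ _ j (by omega) h
              rw [show qlo + 1 - (qlo + 2) = -1 by ring, neg_one_val hn] at hj'
              have hm : (i - (qlo + 2)).val = n - 1 := by omega
              have hiq : i = qlo + 1 := by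
                rw [← him (qlo + 2) i, hm, natCast_sub_one hn]; ring
              exact hi (hiq ▸ hqlo1)
      · -- exactly one Y-position q ; anchor q+1
        push_neg at hQ2e
        refine ⟨q + 1, ?_, ?_⟩
        · intro h
          exact one_ne_zero' hn (add_left_cancel
            (show q + 1 = q + 0 by rw [add_zero]; exact hQ2e _ h))
        · intro i hi
          have hanch : g (q + 1) ∉ Y := by
            intro h
            exact one_ne_zero' hn (add_left_cancel
              (show q + 1 = q + 0 by rw [add_zero]; exact hQ2e _ h))
          have hkey := key (q + 1) hanch (i - (q + 1)).val (Fin.is_lt _) ?_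
          · rwa [him (q + 1) i] at hkey
          · intro j hj0 hjle
            by_contra hYj
            have hmlt : (i - (q + 1)).val < n := Fin.is_lt _
            have h := hQ2e _ hYj
            have hj' : j = ((q - (q + 1) : Fin n)).val := hsolve _ _ j (by omega) h
            rw [show q - (q + 1) = -1 by ring, neg_one_val hn] at hj'
            have hm : (i - (q + 1)).val = n - 1 := by omega
            have hiq : i = q := by
              rw [← him (q + 1) i, hm, natCast_sub_one hn]; ring
            exact hi (hiq ▸ hq)
    · -- no Y-positions at all
      push_neg at hQe
      refine ⟨0, hQe 0, ?_⟩
      intro i hi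
      have := key 0 (hQe 0) (i - 0).val (Fin.is_lt _) (fun j _ _ => hQe _)
      rwa [him 0 i] at this
  obtain ⟨s, hsY, hreach⟩ := anchor
  have hallreach : ∀ i j : Fin n, g i ∉ Y → g j ∉ Y → AReach G Y (g i) (g j) :=
    fun i j hi hj => (hreach i hi).symm.trans (hreach j hj)
  -- Transfer the cycle to an induced cycle of H, contradicting chordality of H.
  refine hch n hn A ⟨⟨e.toEquiv, ?_⟩⟩
  intro i j
  show (H.induce A).Adj (e i) (e j) ↔ (cycleGraph n).Adj i j
  rw [← hAdj i j]
  constructor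
  · intro h
    refine ⟨h, ?_⟩
    by_cases hi : g i ∈ Y
    · exact Or.inl hi
    by_cases hj : g j ∈ Y
    · exact Or.inr (Or.inl hj)
    · exact Or.inr (Or.inr (hallreach i j hi hj))
  · exact fun h => h.1

end Glue

section MinTri

variable {V : Type} {G H : SimpleGraph V}

/-- Key consequence of minimality: every edge of the triangulation joining two
vertices outside an `H`-clique `Y` connects them within a component of `G - Y`. -/
theorem minTri_reach (hmin : G.IsMinimalTriangulation H)
    {Y : Set V} (hY : H.IsClique Y) {p q : V} (hpq : H.Adj p q)
    (hp : p ∉ Y) (hq : q ∉ Y) : AReach G Y p q := by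
  obtain ⟨hGH, hch, hmax⟩ := hmin
  have hle : glueGraph G H Y ≤ H := glueGraph_le
  have hGle : G ≤ glueGraph G H Y := le_glueGraph hGH
  have hnlt := hmax (glueGraph G H Y) hGle (glueGraph_isChordal hch hY)
  have heq : glueGraph G H Y = H := by
    by_contra hne
    exact hnlt (lt_of_le_of_ne hle hne)
  have hadj : (glueGraph G H Y).Adj p q := by rw [heq]; exact hpq
  rcases hadj.2 with h | h | h
  exacts [absurd h hp, absurd h hq, h]

/-- The neighborhood (inside `Ω`) of the component of `w` in `G - Ω`. -/
def Nw (G : SimpleGraph V) (Ω : Set V) (w : V) : Set V := nbr G (comp G Ω w)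

theorem Nw_subset {Ω : Set V} {w : V} : Nw G Ω w ⊆ Ω := nbr_comp_subset

theorem reach_last_nbr {Ω : Set V} :
    ∀ {b v : V} (q : G.Walk b v), v ∈ Ω → b ∉ Ω → (∀ x ∈ q.support, x = v ∨ x ∉ Ω) →
      ∃ c ∈ comp G Ω b, G.Adj c v := by
  intro b v q
  induction q with
  | nil => intro hv hb _; exact absurd hv hb
  | @cons a b₂ v' hadj q ih =>
    intro hv ha hsupp
    by_cases hb₂ : b₂ = v'
    · subst hb₂
      exact ⟨a, mem_comp_self ha, hadj⟩
    · have hb₂Ω : b₂ ∉ Ω := by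
        rcases hsupp b₂ (by simp) with h | h
        · exact absurd h hb₂
        · exact h
      obtain ⟨c', hc', hadj'⟩ := ih hv hb₂Ω (fun x hx => hsupp x (by simp [hx]))
      have hmem : b₂ ∈ comp G Ω a := mem_comp_of_adj (mem_comp_self ha) hadj hb₂Ω
      rw [comp_eq_of_mem hmem] at hc'
      exact ⟨c', hc', hadj'⟩

/-- Cliquishness: any two non-adjacent vertices of a potential maximal clique are
covered by a common component of `G - Ω`. -/
theorem exists_cover (hmin : G.IsMinimalTriangulation H) {Ω : Set V}
    (hclq : H.IsClique Ω) {u v : V} (hu : u ∈ Ω) (hv : v ∈ Ω) (hne : u ≠ v)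
    (hnadj : ¬ G.Adj u v) :
    ∃ w : V, w ∉ Ω ∧ u ∈ Nw G Ω w ∧ v ∈ Nw G Ω w := by
  haveI := Classical.decEq V
  have hYclq : H.IsClique (Ω \ {u, v}) := hclq.subset Set.diff_subset
  have hpq : H.Adj u v := hclq hu hv hne
  have hre : AReach G (Ω \ {u, v}) u v :=
    minTri_reach hmin hYclq hpq (by simp) (by simp)
  obtain ⟨w0, hw0⟩ := hre
  have hpsupp : ∀ x ∈ w0.bypass.support, x ∉ (Ω \ {u, v}) :=
    fun x hx => hw0 x (Walk.support_bypass_subset _ hx)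
  have hpath : w0.bypass.IsPath := Walk.bypass_isPath w0
  set p := w0.bypass with hpdef
  clear_value p
  clear hpdef hw0
  cases p with
  | nil => exact absurd rfl hne
  | @cons _ b _ hadj p' =>
    have hup' : u ∉ p'.support := ((Walk.cons_isPath_iff _ _).mp hpath).2
    by_cases hbv : b = v
    · subst hbv; exact absurd hadj hnadj
    have hbu : b ≠ u := fun h => hup' (h ▸ p'.start_mem_support)
    have hbΩ : b ∉ Ω := by
      intro hbΩ
      have := hpsupp b (by simp)
      rw [Set.mem_diff] at this
      push_neg at this
      have := this hbΩ
      simp only [Set.mem_insert_iff, Set.mem_singleton_iff] at this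
      tauto
    have hsupp' : ∀ x ∈ p'.support, x = v ∨ x ∉ Ω := by
      intro x hx
      by_cases hxv : x = v
      · exact Or.inl hxv
      right
      intro hxΩ
      have := hpsupp x (by simp [hx])
      rw [Set.mem_diff] at this
      push_neg at this
      have := this hxΩ
      simp only [Set.mem_insert_iff, Set.mem_singleton_iff] at this
      rcases this with h | h
      · exact hup' (h ▸ hx)
      · exact hxv h
    obtain ⟨c, hc, hcadj⟩ := reach_last_nbr p' hv hbΩ hsupp'
    refine ⟨b, hbΩ, ⟨fun hmem => (comp_subset_compl hmem) hu, b, mem_comp_self hbΩ, hadj.symm⟩,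
      ⟨fun hmem => (comp_subset_compl hmem) hv, c, hc, hcadj⟩⟩

end MinTri

section Spade

variable {V : Type} {G H : SimpleGraph V}

/-- Adjacency modulo a family of completed sets. -/
def adjS (G : SimpleGraph V) (𝒮 : Set (Set V)) (x y : V) : Prop :=
  G.Adj x y ∨ ∃ S ∈ 𝒮, x ∈ S ∧ y ∈ S

theorem adjS_mono {𝒮 𝒮' : Set (Set V)} (h : 𝒮 ⊆ 𝒮') {x y : V}
    (ha : adjS G 𝒮 x y) : adjS G 𝒮' x y := by
  rcases ha with h' | ⟨S, hS, hx, hy⟩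
  · exact Or.inl h'
  · exact Or.inr ⟨S, h hS, hx, hy⟩

/-- Pairs of `Ω` not yet linked. -/
def badPairs (G : SimpleGraph V) (Ω : Set V) (𝒮 : Set (Set V)) : Set (V × V) :=
  {p | p.1 ∈ Ω ∧ p.2 ∈ Ω ∧ p.1 ≠ p.2 ∧ ¬ adjS G 𝒮 p.1 p.2}

/-- The key combinatorial search: a pair with a covering component such that
everything outside the covering neighborhood is linked to both endpoints. -/
theorem spade [Fintype V] (hmin : G.IsMinimalTriangulation H)
    {Ω : Set V} (hclq : H.IsClique Ω) :
    ∀ (k : ℕ) (𝒮 : Set (Set V)),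
      (∀ S ∈ 𝒮, ∃ w', w' ∉ Ω ∧ S = Nw G Ω w') →
      (badPairs G Ω 𝒮).ncard ≤ k →
      ∀ u₀ v₀ : V, u₀ ∈ Ω → v₀ ∈ Ω → u₀ ≠ v₀ → ¬ adjS G 𝒮 u₀ v₀ →
      ∃ (u v w : V) (𝒮' : Set (Set V)), 𝒮 ⊆ 𝒮' ∧
        (∀ S ∈ 𝒮', ∃ w', w' ∉ Ω ∧ S = Nw G Ω w') ∧
        u ∈ Ω ∧ v ∈ Ω ∧ u ≠ v ∧ ¬ adjS G 𝒮' u v ∧ w ∉ Ω ∧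
        u ∈ Nw G Ω w ∧ v ∈ Nw G Ω w ∧
        ∀ x ∈ Ω, x ∉ Nw G Ω w → adjS G 𝒮' x u ∧ adjS G 𝒮' x v := by
  intro k
  induction k using Nat.strong_induction_on with
  | _ k ih =>
    intro 𝒮 h𝒮 hcard u₀ v₀ hu₀ hv₀ hne hnadj
    have hnG : ¬ G.Adj u₀ v₀ := fun h => hnadj (Or.inl h)
    obtain ⟨w, hw, huw, hvw⟩ := exists_cover hmin hclq hu₀ hv₀ hne hnG
    by_cases hgood : ∀ x ∈ Ω, x ∉ Nw G Ω w → adjS G 𝒮 x u₀ ∧ adjS G 𝒮 x v₀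
    · exact ⟨u₀, v₀, w, 𝒮, subset_rfl, h𝒮, hu₀, hv₀, hne, hnadj, hw, huw, hvw, hgood⟩
    push_neg at hgood
    obtain ⟨x, hx, hxw, hbad⟩ := hgood
    set 𝒮' : Set (Set V) := insert (Nw G Ω w) 𝒮 with h𝒮'def
    have h𝒮'form : ∀ S ∈ 𝒮', ∃ w', w' ∉ Ω ∧ S = Nw G Ω w' := by
      intro S hS
      rcases hS with rfl | hS
      · exact ⟨w, hw, rfl⟩
      · exact h𝒮 S hS
    have hsub : badPairs G Ω 𝒮' ⊂ badPairs G Ω 𝒮 := by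
      constructor
      · rintro ⟨a, b⟩ ⟨h1, h2, h3, h4⟩
        exact ⟨h1, h2, h3, fun h => h4 (adjS_mono (Set.subset_insert _ _) h)⟩
      · intro hsub'
        have hmem : (u₀, v₀) ∈ badPairs G Ω 𝒮 := ⟨hu₀, hv₀, hne, hnadj⟩
        have := hsub' hmem
        exact this.2.2.2 (Or.inr ⟨Nw G Ω w, Set.mem_insert _ _, huw, hvw⟩)
    have hk' : (badPairs G Ω 𝒮').ncard < k :=
      lt_of_lt_of_le (Set.ncard_lt_ncard hsub (Set.toFinite _)) hcard
    rcases Classical.em (adjS G 𝒮 x u₀) with hxu | hb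
    · have hb := hbad hxu
      have hnew : ¬ adjS G 𝒮' x v₀ := by
        rintro (h | ⟨S, hS, hxS, hvS⟩)
        · exact hb (Or.inl h)
        · rcases hS with rfl | hS
          · exact hxw hxS
          · exact hb (Or.inr ⟨S, hS, hxS, hvS⟩)
      have hne' : x ≠ v₀ := fun h => hxw (h ▸ hvw)
      obtain ⟨u', v', w'', 𝒮'', hsub2, hform, hrest⟩ :=
        ih _ hk' 𝒮' h𝒮'form le_rfl x v₀ hx hv₀ hne' hnew
      exact ⟨u', v', w'', 𝒮'', (Set.subset_insert _ _).trans hsub2, hform, hrest⟩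
    · have hnew : ¬ adjS G 𝒮' x u₀ := by
        rintro (h | ⟨S, hS, hxS, huS⟩)
        · exact hb (Or.inl h)
        · rcases hS with rfl | hS
          · exact hxw hxS
          · exact hb (Or.inr ⟨S, hS, hxS, huS⟩)
      have hne' : x ≠ u₀ := fun h => hxw (h ▸ huw)
      obtain ⟨u', v', w'', 𝒮'', hsub2, hform, hrest⟩ :=
        ih _ hk' 𝒮' h𝒮'form le_rfl x u₀ hx hu₀ hne' hnew
      exact ⟨u', v', w'', 𝒮'', (Set.subset_insert _ _).trans hsub2, hform, hrest⟩

end Spade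

section PathMachinery

variable {V : Type} {H : SimpleGraph V}

/-- Suffix of a walk from position `j`. -/
theorem exists_suffix_walk {x y : V} (p : H.Walk x y) (j : ℕ) (hj : j ≤ p.length) :
    ∃ r : H.Walk (p.getVert j) y, r.length + j = p.length ∧
      ∀ z ∈ r.support, z ∈ p.support := by
  induction p generalizing j with
  | nil =>
    have hj0 : j = 0 := by simpa using hj
    subst hj0
    exact ⟨Walk.nil, by simp, by simp⟩
  | @cons a b c hadj q ih =>
    cases j with
    | zero =>
      refine ⟨(Walk.cons hadj q).copy (Walk.getVert_zero _).symm rfl, by simp, by simp⟩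
    | succ j' =>
      obtain ⟨r, hr1, hr2⟩ := ih j' (by simpa [Walk.length_cons] using hj)
      refine ⟨r.copy (Walk.getVert_cons_succ _ _).symm rfl, by simpa using by omega, ?_⟩
      intro z hz
      rw [Walk.support_copy] at hz
      simp [hr2 z hz]

/-- Cutting a chord or a repeated vertex yields a shorter walk. -/
theorem exists_shortcut {x y : V} (p : H.Walk x y) (i j : ℕ) (hij : i < j)
    (hj : j ≤ p.length)
    (h : (i + 2 ≤ j ∧ H.Adj (p.getVert i) (p.getVert j)) ∨ p.getVert i = p.getVert j) :
    ∃ q : H.Walk x y, q.length < p.length ∧ ∀ z ∈ q.support, z ∈ p.support := by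
  induction p generalizing i j with
  | nil => simp only [Walk.length_nil] at hj; omega
  | @cons a b c hadj q ih =>
    cases i with
    | zero =>
      rw [Walk.getVert_zero] at h
      obtain ⟨r, hr1, hr2⟩ := exists_suffix_walk q (j - 1)
        (by simp only [Walk.length_cons] at hj; omega)
      have hgv : (Walk.cons hadj q).getVert j = q.getVert (j - 1) := by
        have := Walk.getVert_cons_succ (n := j - 1) q hadj
        rwa [show (j - 1) + 1 = j by omega] at this
      rcases h with ⟨hj2, h⟩ | h
      · rw [hgv] at h
        refine ⟨Walk.cons h r, ?_, ?_⟩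
        · simp only [Walk.length_cons] at hj ⊢; omega
        · intro z hz
          rcases (by simpa using hz) with rfl | hz
          · simp
          · simp [hr2 z hz]
      · rw [hgv] at h
        refine ⟨r.copy h.symm rfl, ?_, ?_⟩
        · rw [Walk.length_copy]
          simp only [Walk.length_cons] at hj ⊢; omega
        · intro z hz
          rw [Walk.support_copy] at hz
          simp [hr2 z hz]
    | succ i' =>
      cases j with
      | zero => omega
      | succ j' =>
        rw [Walk.getVert_cons_succ, Walk.getVert_cons_succ] at h
        obtain ⟨q', hq1, hq2⟩ := ih i' j' (by omega)
          (by simp only [Walk.length_cons] at hj; omega)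
          (by rcases h with ⟨h1, h2⟩ | h; exacts [Or.inl ⟨by omega, h2⟩, Or.inr h])
        refine ⟨Walk.cons hadj q', ?_, ?_⟩
        · simp only [Walk.length_cons]; omega
        · intro z hz
          rcases (by simpa using hz) with rfl | hz
          · simp
          · simp [hq2 z hz]

/-- A walk of minimal length within a set: it is an induced path. -/
theorem exists_min_walk {C : Set V} {x y : V}
    (hreach : ∃ p : H.Walk x y, ∀ z ∈ p.support, z ∈ C) :
    ∃ p : H.Walk x y, (∀ z ∈ p.support, z ∈ C) ∧
      (∀ i j : ℕ, i < j → j ≤ p.length →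
        p.getVert i ≠ p.getVert j ∧ (j ≠ i + 1 → ¬ H.Adj (p.getVert i) (p.getVert j))) := by
  classical
  set S : Set ℕ := {m | ∃ p : H.Walk x y, p.length = m ∧ ∀ z ∈ p.support, z ∈ C} with hS
  have hSne : S.Nonempty := by
    obtain ⟨p, hp⟩ := hreach
    exact ⟨p.length, p, rfl, hp⟩
  obtain ⟨p, hlen, hsupp⟩ := Nat.sInf_mem hSne
  refine ⟨p, hsupp, ?_⟩
  intro i j hij hj
  constructor
  · intro heq
    obtain ⟨q, hq1, hq2⟩ := exists_shortcut p i j hij hj (Or.inr heq)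
    have : q.length ∈ S := ⟨q, rfl, fun z hz => hsupp z (hq2 z hz)⟩
    have := Nat.sInf_le this
    omega
  · intro hne hadj
    obtain ⟨q, hq1, hq2⟩ := exists_shortcut p i j hij hj (Or.inl ⟨by omega, hadj⟩)
    have : q.length ∈ S := ⟨q, rfl, fun z hz => hsupp z (hq2 z hz)⟩
    have := Nat.sInf_le this
    omega

/-- Distance within a set. -/
noncomputable def dIn (H : SimpleGraph V) (C : Set V) (x y : V) : ℕ :=
  sInf {m | ∃ p : H.Walk x y, p.length = m ∧ ∀ z ∈ p.support, z ∈ C}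

theorem dIn_le {C : Set V} {x y : V} (p : H.Walk x y) (hp : ∀ z ∈ p.support, z ∈ C) :
    dIn H C x y ≤ p.length := Nat.sInf_le ⟨p, rfl, hp⟩

theorem exists_dIn_walk {C : Set V} {x y : V}
    (hreach : ∃ p : H.Walk x y, ∀ z ∈ p.support, z ∈ C) :
    ∃ p : H.Walk x y, p.length = dIn H C x y ∧ ∀ z ∈ p.support, z ∈ C := by
  have hSne : {m | ∃ p : H.Walk x y, p.length = m ∧ ∀ z ∈ p.support, z ∈ C}.Nonempty := by
    obtain ⟨p, hp⟩ := hreach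
    exact ⟨p.length, p, rfl, hp⟩
  exact Nat.sInf_mem hSne

end PathMachinery

section Fan

variable {V : Type} {H : SimpleGraph V}

theorem not_chordal_of_cycle {n : ℕ} (hn : 4 ≤ n) (f : Fin n → V)
    (hinj : Function.Injective f)
    (hiff : ∀ i j : Fin n, H.Adj (f i) (f j) ↔ (cycleGraph n).Adj i j) :
    ¬ H.IsChordal := by
  intro hch
  refine hch n hn (Set.range f) ⟨⟨Equiv.ofInjective f hinj, ?_⟩⟩
  intro i j
  exact hiff i j

theorem val_one_add {n : ℕ} [NeZero n] (hn : 4 ≤ n) (y : Fin n) :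
    ((1 : Fin n) + y).val = if y.val = n - 1 then 0 else y.val + 1 := by
  rw [Fin.val_add, val_one_of hn]
  split_ifs with h
  · rw [show 1 + y.val = n by omega, Nat.mod_self]
  · have := y.isLt
    rw [Nat.mod_eq_of_lt (by omega)]
    omega

theorem cyc_adj_nat {n : ℕ} [NeZero n] (hn : 4 ≤ n) (i j : Fin n) :
    (cycleGraph n).Adj i j ↔
      (j.val + 1 = i.val ∨ i.val + 1 = j.val ∨
        (i.val = 0 ∧ j.val = n - 1) ∨ (j.val = 0 ∧ i.val = n - 1)) := by
  have h1 := val_one_add hn j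
  have h2 := val_one_add hn i
  have hi := i.isLt
  have hj := j.isLt
  rw [cyc_adj_iff hn, Fin.ext_iff, Fin.ext_iff, h1, h2]
  split_ifs with ha hb hb <;> omega

/-- The chordal "fan" contradiction: an induced path plus two clique vertices
hanging at its two ends forms an induced cycle. -/
theorem chordal_no_fan (hch : H.IsChordal) {c₁ c₂ k₁ k₂ : V} {C : Set V}
    (p : H.Walk c₁ c₂) (hp : ∀ z ∈ p.support, z ∈ C)
    (hmin : ∀ i j : ℕ, i < j → j ≤ p.length →
      p.getVert i ≠ p.getVert j ∧ (j ≠ i + 1 → ¬ H.Adj (p.getVert i) (p.getVert j)))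
    (hlen : 1 ≤ p.length)
    (hk₁ : k₁ ∉ C) (hk₂ : k₂ ∉ C) (hk12 : H.Adj k₁ k₂)
    (hadj₁ : H.Adj k₁ c₁) (hadj₂ : H.Adj k₂ c₂)
    (hnadj₁ : ∀ c ∈ C, c ≠ c₁ → ¬ H.Adj k₁ c)
    (hnadj₂ : ∀ c ∈ C, c ≠ c₂ → ¬ H.Adj k₂ c) : False := by
  set L := p.length with hL
  set n := L + 3 with hn3
  have hn : 4 ≤ n := by omega
  haveI : NeZero n := ⟨by omega⟩
  set f : Fin n → V := fun i => if i.val ≤ L then p.getVert i.val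
    else if i.val = L + 1 then k₂ else k₁ with hf
  have hf_path : ∀ i : Fin n, i.val ≤ L → f i = p.getVert i.val := by
    intro i h; simp [hf, h]
  have hf_k2 : ∀ i : Fin n, i.val = L + 1 → f i = k₂ := by
    intro i h; simp [hf, h]
  have hf_k1 : ∀ i : Fin n, i.val = L + 2 → f i = k₁ := by
    intro i h
    have h1 : ¬ i.val ≤ L := by omega
    have h2 : ¬ i.val = L + 1 := by omega
    simp [hf, h1, h2]
  have hmemC : ∀ a : ℕ, a ≤ L → p.getVert a ∈ C := by
    intro a ha
    exact hp _ (Walk.mem_support_iff_exists_getVert.mpr ⟨a, rfl, ha⟩)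
  have hdup : ∀ a b : ℕ, a ≤ L → b ≤ L → p.getVert a = p.getVert b → a = b := by
    intro a b ha hb hab
    rcases Nat.lt_trichotomy a b with h | h | h
    · exact absurd hab (hmin a b h hb).1
    · exact h
    · exact absurd hab.symm (hmin b a h ha).1
  have hc₁ : p.getVert 0 = c₁ := Walk.getVert_zero p
  have hc₂ : p.getVert L = c₂ := Walk.getVert_length p
  have hgetadj : ∀ a b : ℕ, a ≤ L → b ≤ L → (H.Adj (p.getVert a) (p.getVert b) ↔
      (b = a + 1 ∨ a = b + 1)) := by
    intro a b ha hb
    constructor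
    · intro h
      rcases Nat.lt_trichotomy a b with h' | h' | h'
      · by_contra hc
        push_neg at hc
        exact (hmin a b h' hb).2 (by omega) h
      · subst h'; exact absurd h (H.loopless.irrefl _)
      · by_contra hc
        push_neg at hc
        exact (hmin b a h' ha).2 (by omega) h.symm
    · intro h
      rcases h with rfl | rfl
      · exact Walk.adj_getVert_succ p (by omega)
      · exact (Walk.adj_getVert_succ p (by omega)).symm
  have hiff_le : ∀ i j : Fin n, i.val ≤ j.val →
      (H.Adj (f i) (f j) ↔ (cycleGraph n).Adj i j) := by
    intro i j hle
    have hjlt := j.isLt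
    have hilt := i.isLt
    rw [cyc_adj_nat hn]
    by_cases heq : i.val = j.val
    · have hij : i = j := Fin.ext heq
      subst hij
      constructor
      · intro h; exact absurd h (H.loopless.irrefl _)
      · intro h
        exfalso
        simp only [hn3] at hjlt
        omega
    have hlt : i.val < j.val := by omega
    have hjlt' : j.val < L + 3 := hjlt
    rcases Nat.lt_or_ge j.val (L + 1) with hbL | hbL
    · have hj' : j.val ≤ L := by omega
      have hi' : i.val ≤ L := by omega
      rw [hf_path i hi', hf_path j hj', hgetadj _ _ hi' hj']
      omega
    rcases Nat.lt_or_ge j.val (L + 2) with hbL2 | hbL2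
    · have hj' : j.val = L + 1 := by omega
      rw [hf_k2 j hj']
      have hi' : i.val ≤ L := by omega
      rw [hf_path i hi']
      have hiff2 : H.Adj (p.getVert i.val) k₂ ↔ i.val = L := by
        constructor
        · intro h
          by_contra hne
          exact hnadj₂ _ (hmemC _ hi')
            (fun hc => hne (hdup _ _ hi' le_rfl (hc.trans hc₂.symm))) h.symm
        · intro h; rw [h, hc₂]; exact hadj₂.symm
      rw [hiff2]; omega
    · have hj' : j.val = L + 2 := by omega
      rw [hf_k1 j hj']
      rcases Nat.lt_or_ge i.val (L + 1) with hiL | hiL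
      · have hi' : i.val ≤ L := by omega
        rw [hf_path i hi']
        have hiff2 : H.Adj (p.getVert i.val) k₁ ↔ i.val = 0 := by
          constructor
          · intro h
            by_contra hne
            exact hnadj₁ _ (hmemC _ hi')
              (fun hc => hne (hdup _ _ hi' (by omega) (hc.trans hc₁.symm))) h.symm
          · intro h; rw [h, hc₁]; exact hadj₁.symm
        rw [hiff2]; omega
      · have hi' : i.val = L + 1 := by omega
        rw [hf_k2 i hi']
        exact iff_of_true hk12.symm (Or.inr (Or.inl (by omega)))
  have hiff : ∀ i j : Fin n, H.Adj (f i) (f j) ↔ (cycleGraph n).Adj i j := by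
    intro i j
    rcases le_total i.val j.val with h | h
    · exact hiff_le i j h
    · have h2 := hiff_le j i h
      constructor
      · intro hh; exact ((h2.mp hh.symm)).symm
      · intro hh; exact ((h2.mpr hh.symm)).symm
  have hinj : Function.Injective f := by
    intro i j h
    apply Fin.ext
    have hilt := i.isLt
    have hjlt := j.isLt
    by_cases hi1 : i.val ≤ L <;> by_cases hj1 : j.val ≤ L
    · rw [hf_path i hi1, hf_path j hj1] at h
      exact hdup _ _ hi1 hj1 h
    · exfalso
      rw [hf_path i hi1] at h
      by_cases hj2 : j.val = L + 1
      · rw [hf_k2 j hj2] at h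
        exact hk₂ (h ▸ hmemC _ hi1)
      · rw [hf_k1 j (by omega)] at h
        exact hk₁ (h ▸ hmemC _ hi1)
    · exfalso
      rw [hf_path j hj1] at h
      by_cases hi2 : i.val = L + 1
      · rw [hf_k2 i hi2] at h
        exact hk₂ (h ▸ hmemC _ hj1)
      · rw [hf_k1 i (by omega)] at h
        exact hk₁ (h ▸ hmemC _ hj1)
    · by_cases hi2 : i.val = L + 1 <;> by_cases hj2 : j.val = L + 1
      · omega
      · exfalso
        rw [hf_k2 i hi2, hf_k1 j (by omega)] at h
        exact hk12.ne h.symm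
      · exfalso
        rw [hf_k1 i (by omega), hf_k2 j hj2] at h
        exact hk12.ne h
      · omega
  exact not_chordal_of_cycle hn f hinj hiff hch

end Fan

section Dom

variable {V : Type} {H : SimpleGraph V}

/-- In a chordal graph, a connected set dominating a clique has a member adjacent to
the whole clique. -/
theorem chordal_dom [Fintype V] (hch : H.IsChordal) {K : Set V} (hK : H.IsClique K) :
    ∀ (m : ℕ) (C : Set V), C.ncard ≤ m → C.Nonempty → (∀ x ∈ C, x ∉ K) →
      (∀ x ∈ C, ∀ y ∈ C, ∃ p : H.Walk x y, ∀ z ∈ p.support, z ∈ C) →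
      (∀ k ∈ K, ∃ c ∈ C, H.Adj k c) →
      ∃ c ∈ C, ∀ k ∈ K, H.Adj c k := by
  intro m
  induction m with
  | zero =>
    intro C hcard hne _ _ _
    exfalso
    have := Set.ncard_pos (Set.toFinite C) |>.mpr hne
    omega
  | succ m ih =>
    intro C hcard hne hdisj hconn hdom
    by_cases hdone : ∃ c ∈ C, ∀ k ∈ K, H.Adj c k
    · exact hdone
    push_neg at hdone
    exfalso
    obtain ⟨a, ha⟩ := hne
    have hC2 : ∃ b ∈ C, b ≠ a := by
      by_contra h
      push_neg at h
      obtain ⟨k, hk, hnadj⟩ := hdone a ha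
      obtain ⟨c, hc, hadj⟩ := hdom k hk
      rw [h c hc] at hadj
      exact hnadj hadj.symm
    -- removability of a maximizer of distance to an anchor
    have hremove : ∀ t anchor : V, t ∈ C → anchor ∈ C →
        (∀ x ∈ C, dIn H C x anchor ≤ dIn H C t anchor) →
        ∀ x ∈ C, x ≠ t → ∃ p : H.Walk x anchor, ∀ z ∈ p.support, z ∈ C \ {t} := by
      intro t anchor htC hanC hmax x hxC hxt
      obtain ⟨p, hplen, hpsupp⟩ := exists_dIn_walk (hconn x hxC anchor hanC)
      refine ⟨p, fun z hz => ⟨hpsupp z hz, ?_⟩⟩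
      simp only [Set.mem_singleton_iff]
      intro hzt
      subst hzt
      rw [Walk.mem_support_iff_exists_getVert] at hz
      obtain ⟨k, hk1, hk2⟩ := hz
      have hk0 : k ≠ 0 := by
        intro h
        subst h
        rw [Walk.getVert_zero] at hk1
        exact hxt hk1
      obtain ⟨r, hr1, hr2⟩ := exists_suffix_walk p k hk2
      have hdt : dIn H C z anchor ≤ r.length := by
        have hle := dIn_le (C := C) (r.copy (by rw [hk1]) rfl) ?_
        · rwa [Walk.length_copy] at hle
        · intro w hw
          rw [Walk.support_copy] at hw
          exact hpsupp w (hr2 w hw)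
      have hx_le := hmax x hxC
      have hz_le := hmax z htC
      omega
    -- nonzero distances to distinct points
    have hdpos : ∀ x ∈ C, ∀ y ∈ C, x ≠ y → 1 ≤ dIn H C x y := by
      intro x hx y hy hxy
      by_contra h
      push_neg at h
      obtain ⟨p, hplen, hpsupp⟩ := exists_dIn_walk (hconn x hx y hy)
      have : p.length = 0 := by omega
      exact hxy (Walk.eq_of_length_eq_zero this)
    have hdself : ∀ x ∈ C, dIn H C x x = 0 := by
      intro x hx
      have := dIn_le (C := C) (Walk.nil : H.Walk x x) (by simpa using hx)
      simp only [Walk.length_nil] at this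
      omega
    -- first removable vertex c₁ (farthest from a)
    have hCfin : C.Finite := Set.toFinite _
    obtain ⟨c₁, hc₁C, hc₁max⟩ := Finset.exists_max_image hCfin.toFinset
      (fun x => dIn H C x a) ⟨a, by rwa [Set.Finite.mem_toFinset]⟩
    rw [Set.Finite.mem_toFinset] at hc₁C
    have hc₁max' : ∀ x ∈ C, dIn H C x a ≤ dIn H C c₁ a := by
      intro x hx
      exact hc₁max x (by rwa [Set.Finite.mem_toFinset])
    have hc₁a : c₁ ≠ a := by
      intro h
      obtain ⟨b, hb, hba⟩ := hC2
      have h1 := hdpos b hb a ha hba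
      have h2 := hc₁max' b hb
      rw [h, hdself a ha] at h2
      omega
    -- second removable vertex c₂ (farthest from c₁)
    obtain ⟨c₂, hc₂C, hc₂max⟩ := Finset.exists_max_image hCfin.toFinset
      (fun x => dIn H C x c₁) ⟨a, by rwa [Set.Finite.mem_toFinset]⟩
    rw [Set.Finite.mem_toFinset] at hc₂C
    have hc₂max' : ∀ x ∈ C, dIn H C x c₁ ≤ dIn H C c₂ c₁ := by
      intro x hx
      exact hc₂max x (by rwa [Set.Finite.mem_toFinset])
    have hc₂c₁ : c₂ ≠ c₁ := by
      intro h
      have h1 := hdpos a ha c₁ hc₁C (fun hh => hc₁a hh.symm)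
      have h2 := hc₂max' a ha
      rw [h, hdself c₁ hc₁C] at h2
      omega
    -- subsets C \ {c₁}, C \ {c₂} are connected
    have hconn₁ : ∀ x ∈ C \ {c₁}, ∀ y ∈ C \ {c₁},
        ∃ p : H.Walk x y, ∀ z ∈ p.support, z ∈ C \ {c₁} := by
      intro x hx y hy
      obtain ⟨p, hp⟩ := hremove c₁ a hc₁C ha hc₁max' x hx.1 hx.2
      obtain ⟨q, hq⟩ := hremove c₁ a hc₁C ha hc₁max' y hy.1 hy.2
      refine ⟨p.append q.reverse, ?_⟩
      intro z hz
      rw [Walk.mem_support_append_iff] at hz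
      rcases hz with hz | hz
      · exact hp z hz
      · rw [Walk.support_reverse, List.mem_reverse] at hz
        exact hq z hz
    have hconn₂ : ∀ x ∈ C \ {c₂}, ∀ y ∈ C \ {c₂},
        ∃ p : H.Walk x y, ∀ z ∈ p.support, z ∈ C \ {c₂} := by
      intro x hx y hy
      obtain ⟨p, hp⟩ := hremove c₂ c₁ hc₂C hc₁C hc₂max' x hx.1 hx.2
      obtain ⟨q, hq⟩ := hremove c₂ c₁ hc₂C hc₁C hc₂max' y hy.1 hy.2
      refine ⟨p.append q.reverse, ?_⟩
      intro z hz
      rw [Walk.mem_support_append_iff] at hz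
      rcases hz with hz | hz
      · exact hp z hz
      · rw [Walk.support_reverse, List.mem_reverse] at hz
        exact hq z hz
    -- both removals must break domination (else recurse)
    have hcard' : ∀ t : V, t ∈ C → (C \ {t}).ncard ≤ m := by
      intro t ht
      have := Set.ncard_diff_singleton_add_one ht (Set.toFinite C)
      omega
    have hrec : ∀ t : V, t ∈ C → (∃ u ∈ C, u ≠ t) →
        (∀ x ∈ C \ {t}, ∀ y ∈ C \ {t}, ∃ p : H.Walk x y, ∀ z ∈ p.support, z ∈ C \ {t}) →
        ¬ (∀ k ∈ K, ∃ c ∈ C \ {t}, H.Adj k c) := by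
      intro t ht hu hcn hdm
      obtain ⟨u, huC, hut⟩ := hu
      obtain ⟨c, hc, hcall⟩ := ih (C \ {t}) (hcard' t ht)
        ⟨u, huC, hut⟩ (fun x hx => hdisj x hx.1) hcn hdm
      exact hdone c hc.1 |>.elim (fun k hk => hk.2 (hcall k hk.1))
    have hbad₁ := hrec c₁ hc₁C ⟨a, ha, fun h => hc₁a h.symm⟩ hconn₁
    have hbad₂ := hrec c₂ hc₂C ⟨c₁, hc₁C, fun h => hc₂c₁ h.symm⟩ hconn₂
    push_neg at hbad₁ hbad₂
    obtain ⟨k₁, hk₁K, hk₁bad⟩ := hbad₁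
    obtain ⟨k₂, hk₂K, hk₂bad⟩ := hbad₂
    have hk₁c₁ : H.Adj k₁ c₁ := by
      obtain ⟨c, hc, hadj⟩ := hdom k₁ hk₁K
      by_cases h : c = c₁
      · rwa [h] at hadj
      · exact absurd hadj (hk₁bad c ⟨hc, h⟩)
    have hk₂c₂ : H.Adj k₂ c₂ := by
      obtain ⟨c, hc, hadj⟩ := hdom k₂ hk₂K
      by_cases h : c = c₂
      · rwa [h] at hadj
      · exact absurd hadj (hk₂bad c ⟨hc, h⟩)
    have hk₁k₂ : k₁ ≠ k₂ := by
      intro h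
      subst h
      exact hk₁bad c₂ ⟨hc₂C, hc₂c₁⟩ hk₂c₂
    have hkadj : H.Adj k₁ k₂ := hK hk₁K hk₂K hk₁k₂
    -- induced path from c₁ to c₂ within C
    obtain ⟨p, hpC, hpmin⟩ := exists_min_walk (hconn c₁ hc₁C c₂ hc₂C)
    have hplen : 1 ≤ p.length := by
      by_contra h
      push_neg at h
      have h0 : p.length = 0 := by omega
      exact hc₂c₁ (Walk.eq_of_length_eq_zero h0).symm
    exact chordal_no_fan hch p hpC hpmin hplen
      (fun h => hdisj k₁ h hk₁K) (fun h => hdisj k₂ h hk₂K) hkadj hk₁c₁ hk₂c₂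
      (fun c hc hnec => hk₁bad c ⟨hc, hnec⟩) (fun c hc hnec => hk₂bad c ⟨hc, hnec⟩)

end Dom

section NoFull

variable {V : Type} {G H : SimpleGraph V}

/-- No full components: some vertex of the maximal clique avoids the neighborhood of
any component of `G - Ω`. -/
theorem exists_outside_Nw [Fintype V] (hGH : G ≤ H) (hch : H.IsChordal)
    {Ω : Set V} (hclq : H.IsClique Ω)
    (hmax : ∀ Y, H.IsClique Y → Ω ⊆ Y → Y = Ω) {w : V} (hw : w ∉ Ω) :
    ∃ z ∈ Ω, z ∉ Nw G Ω w := by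
  by_contra h
  push_neg at h
  have hCne : (comp G Ω w).Nonempty := ⟨w, mem_comp_self hw⟩
  have hdisj : ∀ x ∈ comp G Ω w, x ∉ Ω := fun x hx => comp_subset_compl hx
  have hconn : ∀ x ∈ comp G Ω w, ∀ y ∈ comp G Ω w,
      ∃ p : H.Walk x y, ∀ z ∈ p.support, z ∈ comp G Ω w := by
    intro x hx y hy
    obtain ⟨q, hq⟩ := (hx : AReach G Ω w x).symm.trans hy
    refine ⟨q.mapLe hGH, ?_⟩
    intro z hz
    have hz' : z ∈ q.support := by
      have := Walk.support_map (f := SimpleGraph.Hom.ofLE hGH) (p := q)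
      rw [Walk.mapLe] at hz
      rw [this] at hz
      simpa using hz
    exact walk_stays_in_comp q hq hx z hz'
  have hdom : ∀ k ∈ Ω, ∃ c ∈ comp G Ω w, H.Adj k c := by
    intro k hk
    obtain ⟨hkc, c, hc, hadj⟩ := h k hk
    exact ⟨c, hc, (hGH hadj).symm⟩
  obtain ⟨c, hcC, hcall⟩ := chordal_dom hch hclq (comp G Ω w).ncard (comp G Ω w)
    le_rfl hCne hdisj hconn hdom
  have hY : H.IsClique (insert c Ω) :=
    hclq.insert (fun b hb _ => hcall b hb)
  have heq := hmax _ hY (Set.subset_insert _ _)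
  have hcΩ : c ∈ Ω := heq ▸ Set.mem_insert c Ω
  exact hdisj c hcC hcΩ

end NoFull

section MinSep

variable {V : Type} {G : SimpleGraph V}

/-- A set with "two full sides" is a minimal separator. -/
theorem minsep_of_two_sides {T : Set V} {p q : V}
    (hne : p ≠ q) (hnadj : ¬ G.Adj p q) (hp : p ∉ T) (hq : q ∉ T)
    (hsep : ∀ w : G.Walk p q, ∃ x ∈ w.support, x ∈ T)
    (hfullp : ∀ t ∈ T, ∃ a, G.Adj a t ∧ AReach G T p a)
    (hfullq : ∀ t ∈ T, ∃ b, G.Adj t b ∧ AReach G T b q) :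
    G.IsMinimalSeparator T := by
  refine ⟨p, q, hne, hnadj, ⟨hp, hq, hsep⟩, ?_⟩
  intro T' hT'
  obtain ⟨t, htT, htT'⟩ := Set.exists_of_ssubset hT'
  rintro ⟨hpT', hqT', hsep'⟩
  obtain ⟨a, haadj, hpa⟩ := hfullp t htT
  obtain ⟨b, hbadj, hbq⟩ := hfullq t htT
  obtain ⟨w₁, hw₁⟩ := hpa
  obtain ⟨w₂, hw₂⟩ := hbq
  obtain ⟨x, hx, hxT'⟩ := hsep' (w₁.append (Walk.cons haadj (Walk.cons hbadj w₂)))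
  have hxT : x ∈ T := hT'.subset hxT'
  rw [Walk.mem_support_append_iff] at hx
  rcases hx with hx | hx
  · exact hw₁ x hx hxT
  · rcases (by simpa using hx) with rfl | rfl | hx
    · exact hw₁ x w₁.end_mem_support hxT
    · exact htT' hxT'
    · exact hw₂ x hx hxT

end MinSep

section SSep

variable {V : Type} {G H : SimpleGraph V}

theorem comp_AReach {Z M : Set V} {w b c : V} (hb : b ∈ comp G Z w) (hc : c ∈ comp G Z w)
    (hM : ∀ x, x ∈ comp G Z w → x ∉ M) : AReach G M b c := by
  obtain ⟨p, hp⟩ := (hb : AReach G Z w b).symm.trans hc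
  exact ⟨p, fun x hx => hM x (walk_stays_in_comp p hp hb x hx)⟩

/-- The neighborhood of a component of `G - Ω` is a minimal separator, provided some
vertex of `Ω` lies outside it. -/
theorem Nw_minsep (hmin : G.IsMinimalTriangulation H) {Ω : Set V}
    (hclq : H.IsClique Ω) {w z₀ : V} (hw : w ∉ Ω) (hz₀ : z₀ ∈ Ω)
    (hz₀S : z₀ ∉ Nw G Ω w) : G.IsMinimalSeparator (Nw G Ω w) := by
  have hSsub : Nw G Ω w ⊆ Ω := Nw_subset
  have hdisjS : ∀ x, x ∈ comp G Ω w → x ∉ Nw G Ω w :=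
    fun x hx hxS => comp_subset_compl hx (hSsub hxS)
  apply minsep_of_two_sides (p := w) (q := z₀)
  · rintro rfl; exact hw hz₀
  · intro h
    exact hz₀S ⟨fun hmem => comp_subset_compl hmem hz₀, w, mem_comp_self hw, h⟩
  · exact fun hS => hSsub hS |> hw
  · exact hz₀S
  · intro wk
    obtain ⟨x, hx, hxn⟩ := walk_meets_nbr (M := comp G Ω w) wk.reverse
      (fun hmem => comp_subset_compl hmem hz₀) (mem_comp_self hw)
    rw [Walk.support_reverse, List.mem_reverse] at hx
    exact ⟨x, hx, hxn⟩
  · rintro t ⟨htC, a, haC, hadj⟩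
    exact ⟨a, hadj, comp_AReach (mem_comp_self hw) haC hdisjS⟩
  · rintro t ⟨htC, a, haC, hadj⟩
    have htΩ : t ∈ Ω := hSsub ⟨htC, a, haC, hadj⟩
    have htz : t ≠ z₀ := fun h => hz₀S (h ▸ ⟨htC, a, haC, hadj⟩)
    by_cases hadj' : G.Adj t z₀
    · exact ⟨z₀, hadj', AReach.refl hz₀S⟩
    · obtain ⟨w', hw', htN, hzN⟩ := exists_cover hmin hclq htΩ hz₀ htz hadj'
      obtain ⟨_, c, hcC, hcadj⟩ := htN
      obtain ⟨_, c', hc'C, hc'adj⟩ := hzN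
      have hdisj' : ∀ x, x ∈ comp G Ω w' → x ∉ Nw G Ω w :=
        fun x hx hxS => comp_subset_compl hx (hSsub hxS)
      exact ⟨c, hcadj.symm, (comp_AReach hcC hc'C hdisj').step hc'adj hz₀S⟩

end SSep

end PMC

/-- Every potential maximal clique of `G` is either a clique in `G`,
or is contained in the union of two minimal separators of `G`. -/
theorem isPotentialMaxClique_isClique_or_subset_union_minimalSeparators
    {V : Type} [Fintype V] (G : SimpleGraph V) (X : Set V)
    (hX : G.IsPotentialMaxClique X) :
    G.IsClique X ∨
      ∃ S T : Set V, G.IsMinimalSeparator S ∧ G.IsMinimalSeparator T ∧ X ⊆ S ∪ T := by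

  classical
  by_cases hclG : G.IsClique X
  · exact Or.inl hclG
  right
  obtain ⟨H, hmin, hclq, hmax⟩ := hX
  rw [SimpleGraph.isClique_iff, Set.Pairwise] at hclG
  push_neg at hclG
  obtain ⟨u₀, hu₀, v₀, hv₀, hne₀, hnadj₀⟩ := hclG
  have hGH := hmin.1
  have hnadjS₀ : ¬ PMC.adjS G ∅ u₀ v₀ := by
    rintro (h | ⟨S, hS, -⟩)
    · exact hnadj₀ h
    · exact Set.notMem_empty S hS
  obtain ⟨u, v, w, 𝒮, -, hform, huΩ, hvΩ, huv, hnadjS, hw, huNw, hvNw, hgood⟩ :=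
    PMC.spade hmin hclq (PMC.badPairs G X ∅).ncard ∅
      (by rintro S hS; exact absurd hS (Set.notMem_empty S)) le_rfl
      u₀ v₀ hu₀ hv₀ hne₀ hnadjS₀
  have hnadjG : ¬ G.Adj u v := fun h => hnadjS (Or.inl h)
  obtain ⟨z₀, hz₀Ω, hz₀S⟩ := PMC.exists_outside_Nw hGH hmin.2.1 hclq hmax hw
  set A : Set V := {a | a = u ∨ (a ∉ X ∧ u ∈ PMC.Nw G X a ∧ v ∉ PMC.Nw G X a)} with hAdef
  set T₁ : Set V := PMC.nbr G A with hT₁def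
  set W : Set V := PMC.comp G T₁ v with hWdef
  set T : Set V := PMC.nbr G W with hTdef
  have huA : u ∈ A := Or.inl rfl
  have hAΩ : ∀ a ∈ A, a ≠ u → a ∉ X := by
    rintro a (rfl | ⟨h, -, -⟩) hne
    · exact absurd rfl hne
    · exact h
  have hvA : v ∉ A := by
    rintro (h | ⟨h, -, -⟩)
    · exact huv h.symm
    · exact h hvΩ
  have hcompA : ∀ a ∈ A, a ≠ u → ∀ c ∈ PMC.comp G X a, c ∈ A := by
    rintro a (rfl | ⟨haX, hu', hv'⟩) hnea c hc
    · exact absurd rfl hnea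
    · refine Or.inr ⟨PMC.comp_subset_compl hc, ?_, ?_⟩
      · show u ∈ PMC.nbr G (PMC.comp G X c)
        rw [PMC.comp_eq_of_mem hc]
        exact hu'
      · show v ∉ PMC.nbr G (PMC.comp G X c)
        rw [PMC.comp_eq_of_mem hc]
        exact hv'
  have hAreach : ∀ a ∈ A, ∃ p : G.Walk u a, ∀ z ∈ p.support, z ∈ A := by
    rintro a haA
    rcases haA with rfl | ⟨haX, hu', hv'⟩
    · exact ⟨Walk.nil, by simpa using huA⟩
    · have haA : a ∈ A := Or.inr ⟨haX, hu', hv'⟩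
      obtain ⟨-, c, hcC, hcadj⟩ := hu'
      obtain ⟨q, hq⟩ := (hcC : PMC.AReach G X a c).symm
      refine ⟨Walk.cons hcadj.symm q, ?_⟩
      intro z hz
      rcases (by simpa using hz) with rfl | hz
      · exact huA
      · exact hcompA a haA (fun h => haX (h ▸ huΩ)) z
          (PMC.walk_stays_in_comp q hq hcC z hz)
  have hvT₁ : v ∉ T₁ := by
    rintro ⟨hvA', a, haA, hadj⟩
    rcases haA with rfl | ⟨haX, hu', hv'⟩
    · exact hnadjG hadj
    · exact hv' ⟨fun hmem => PMC.comp_subset_compl hmem hvΩ,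
        a, PMC.mem_comp_self haX, hadj⟩
  have hWA : ∀ z ∈ W, z ∉ A := by
    intro z hz hzA
    obtain ⟨p, hp⟩ := (hz : PMC.AReach G T₁ v z)
    obtain ⟨x, hx, hxn⟩ := PMC.walk_meets_nbr (M := A) p hvA hzA
    exact hp x hx hxn
  have hWT₁ : ∀ z ∈ W, z ∉ T₁ := fun z hz => PMC.comp_subset_compl hz
  have huW : u ∉ W := fun h => hWA u h huA
  have hvW : v ∈ W := PMC.mem_comp_self hvT₁
  have huT : u ∉ T := by
    rintro ⟨huW', b, hbW, hbadj⟩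
    by_cases hbA : b ∈ A
    · exact hWA b hbW hbA
    · exact hWT₁ b hbW ⟨hbA, u, huA, hbadj.symm⟩
  have hvT : v ∉ T := fun h => h.1 hvW
  have hTT₁ : T ⊆ T₁ := by
    rintro t ⟨htW, b, hbW, hbadj⟩
    by_contra htT₁
    exact htW (PMC.mem_comp_of_adj hbW hbadj htT₁)
  have hAT : ∀ a ∈ A, a ∉ T := fun a ha hT' => (hTT₁ hT').1 ha
  have hTmin : G.IsMinimalSeparator T := by
    apply PMC.minsep_of_two_sides (p := u) (q := v) huv hnadjG huT hvT
    · intro wk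
      exact PMC.walk_meets_nbr (M := W) wk huW hvW
    · rintro t htT
      obtain ⟨htA, a, haA, hadj⟩ := hTT₁ htT
      obtain ⟨p, hp⟩ := hAreach a haA
      exact ⟨a, hadj, p, fun z hz hzT => hAT z (hp z hz) hzT⟩
    · rintro t ⟨htW, b, hbW, hbadj⟩
      refine ⟨b, hbadj.symm, PMC.comp_AReach hbW hvW ?_⟩
      intro x hx hxT
      exact hxT.1 hx
  have hcover : ∀ x ∈ X, x ∉ PMC.Nw G X w → x ∈ T := by
    intro x hxΩ hxS
    have hxu : x ≠ u := fun h => hxS (h ▸ huNw)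
    have hxv : x ≠ v := fun h => hxS (h ▸ hvNw)
    obtain ⟨hgu, hgv⟩ := hgood x hxΩ hxS
    have hxA : x ∉ A := fun h => hAΩ x h hxu hxΩ
    have hxT₁ : x ∈ T₁ := by
      rcases hgu with h | ⟨S₁, hS₁, hxS₁, huS₁⟩
      · exact ⟨hxA, u, huA, h.symm⟩
      · obtain ⟨w₁, hw₁X, rfl⟩ := hform S₁ hS₁
        have hvS₁ : v ∉ PMC.Nw G X w₁ := fun hv' => hnadjS (Or.inr ⟨_, hS₁, huS₁, hv'⟩)
        have hw₁A : w₁ ∈ A := Or.inr ⟨hw₁X, huS₁, hvS₁⟩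
        obtain ⟨-, c, hcC, hcadj⟩ := hxS₁
        exact ⟨hxA, c, hcompA w₁ hw₁A (fun h => hw₁X (h ▸ huΩ)) c hcC, hcadj⟩
    have hxW : x ∉ W := fun h => hWT₁ x h hxT₁
    rcases hgv with h | ⟨S₂, hS₂, hxS₂, hvS₂⟩
    · exact ⟨hxW, v, hvW, h.symm⟩
    · obtain ⟨w₂, hw₂X, rfl⟩ := hform S₂ hS₂
      have huS₂ : u ∉ PMC.Nw G X w₂ := fun hu' => hnadjS (Or.inr ⟨_, hS₂, hu', hvS₂⟩)
      have hcompT₁ : ∀ y, y ∈ PMC.comp G X w₂ → y ∉ T₁ := by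
        rintro y hy ⟨hyA, a, haA, haadj⟩
        rcases haA with rfl | ⟨haX, hu', hv'⟩
        · exact huS₂ ⟨fun hmem => PMC.comp_subset_compl hmem huΩ, y, hy, haadj.symm⟩
        · have haC : a ∈ PMC.comp G X w₂ := PMC.mem_comp_of_adj hy haadj.symm haX
          apply huS₂
          show u ∈ PMC.nbr G (PMC.comp G X w₂)
          rw [← PMC.comp_eq_of_mem haC]
          exact hu'
      obtain ⟨-, c₂, hc₂C, hc₂adj⟩ := hvS₂
      have hc₂W : c₂ ∈ W :=
        PMC.mem_comp_of_adj hvW hc₂adj.symm (hcompT₁ c₂ hc₂C)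
      obtain ⟨-, c₃, hc₃C, hc₃adj⟩ := hxS₂
      have hc₃W : c₃ ∈ W :=
        (hc₂W : PMC.AReach G T₁ v c₂).trans (PMC.comp_AReach hc₂C hc₃C hcompT₁)
      exact ⟨hxW, c₃, hc₃W, hc₃adj⟩
  refine ⟨PMC.Nw G X w, T, PMC.Nw_minsep hmin hclq hw hz₀Ω hz₀S, hTmin, ?_⟩
  intro x hx
  by_cases hxS : x ∈ PMC.Nw G X w
  · exact Or.inl hxS
  · exact Or.inr (hcover x hx hxS)
end

section
/- Let G be a graph, let G' be an induced subgraph of G, and let S' be a minimal separator in G'. Then there exists a minimal separator S in G such that S' ⊆ S. -/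
open SimpleGraph

/-! ## Common definitions -/

variable {V : Type} {W : Type}

lemma walk_to_induce {G : SimpleGraph V} {A : Set V} :
    ∀ {a b : V} (p : G.Walk a b) (ha : a ∈ A) (hb : b ∈ A),
    (∀ x ∈ p.support, x ∈ A) →
    ∃ q : (G.induce A).Walk ⟨a, ha⟩ ⟨b, hb⟩, ∀ x ∈ q.support, ↑x ∈ p.support := by
  intro a b p
  induction p with
  | nil => intro ha hb _; exact ⟨.nil, by simp⟩
  | @cons u c d h p ih =>
    intro ha hb hsup
    have hc : c ∈ A := hsup c (by simp)
    obtain ⟨q, hq⟩ := ih hc hb (fun x hx => hsup x (by simp [hx]))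
    refine ⟨Walk.cons (show (G.induce A).Adj ⟨u,ha⟩ ⟨c,hc⟩ from h) q, ?_⟩
    intro x hx
    simp only [Walk.support_cons, List.mem_cons] at hx ⊢
    rcases hx with h1 | h1
    · simp [h1]
    · exact Or.inr (hq x h1)

/-- If `G'` is an induced subgraph of `G` (induced on a set `A`) and
`S'` is a minimal separator of `G'`, then some minimal separator `S` of `G`
contains `S'`. -/
theorem exists_minimalSeparator_superset_of_induce
    {V : Type} [Fintype V] (G : SimpleGraph V) (A : Set V) (S' : Set A)
    (hS' : (G.induce A).IsMinimalSeparator S') :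
    ∃ S : Set V, G.IsMinimalSeparator S ∧ (Subtype.val '' S') ⊆ S := by
  obtain ⟨u, v, huv, hadj, ⟨huS, hvS, hsep⟩, hmin⟩ := hS'
  set S₀ : Set V := (Subtype.val '' S') ∪ Aᶜ with hS₀def
  -- S₀ is a u.val, v.val separator in G
  have huA : (u : V) ∈ A := u.2
  have hvA : (v : V) ∈ A := v.2
  have husep : ∀ S : Set V, S ⊆ S₀ → (↑u ∉ S ∧ ↑v ∉ S) := by
    intro S hSsub
    constructor
    · intro h
      rcases hSsub h with ⟨x, hx, hxe⟩ | h
      · exact huS (by rwa [Subtype.val_injective hxe] at hx)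
      · exact h huA
    · intro h
      rcases hSsub h with ⟨x, hx, hxe⟩ | h
      · exact hvS (by rwa [Subtype.val_injective hxe] at hx)
      · exact h hvA
  have hS₀sep : G.IsSeparator ↑u ↑v S₀ := by
    refine ⟨(husep S₀ le_rfl).1, (husep S₀ le_rfl).2, ?_⟩
    intro p
    by_contra hcon
    push_neg at hcon
    have hsup : ∀ x ∈ p.support, x ∈ A := by
      intro x hx
      by_contra hxA
      exact hcon x hx (Or.inr hxA)
    obtain ⟨q, hq⟩ := walk_to_induce p huA hvA hsup
    obtain ⟨x, hxq, hxS'⟩ := hsep q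
    exact hcon x (hq x hxq) (Or.inl ⟨x, hxS', rfl⟩)
  -- pick a minimal separator contained in S₀
  obtain ⟨S, ⟨hSsub, hSsep⟩, hSmin'⟩ :=
    Set.Finite.exists_minimalFor id {S : Set V | S ⊆ S₀ ∧ G.IsSeparator ↑u ↑v S}
      (Set.toFinite _) ⟨S₀, le_rfl, hS₀sep⟩
  have hSmin : ∀ T, T ⊆ S₀ ∧ G.IsSeparator ↑u ↑v T → ¬ T < S :=
    fun T hT hTS => lt_irrefl _ (hTS.trans_le (hSmin' hT hTS.le))
  have hne : (u : V) ≠ v := fun h => huv (Subtype.val_injective h)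
  have hnadj : ¬ G.Adj ↑u ↑v := hadj
  refine ⟨S, ⟨↑u, ↑v, hne, hnadj, hSsep, fun T hT hTsep =>
    hSmin T ⟨hT.le.trans hSsub, hTsep⟩ hT⟩, ?_⟩
  -- S' ⊆ S
  rintro _ ⟨x, hxS', rfl⟩
  by_contra hxS
  -- S' \ {x} is not a separator, gives a walk in G.induce A avoiding S' \ {x}
  have hssub : S' \ {x} ⊂ S' := Set.sdiff_singleton_ssubset.mpr hxS'
  have := hmin _ hssub
  rw [SimpleGraph.IsSeparator] at this
  push_neg at this
  have hxne : ∀ w : A, w ∈ S' \ {x} → False → True := fun _ _ _ => trivial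
  obtain ⟨q, hq⟩ : ∃ q : (G.induce A).Walk u v, ∀ y ∈ q.support, y ∉ S' \ {x} := by
    rcases this (fun h => huS h.1) (fun h => hvS h.1) with ⟨q, hq⟩
    exact ⟨q, fun y hy hyS => hq y hy hyS⟩
  -- map q to a walk in G
  let p : G.Walk ↑u ↑v := q.map (SimpleGraph.Embedding.induce A).toHom
  obtain ⟨z, hzp, hzS⟩ := hSsep.2.2 p
  -- z ∈ support p means z = val y for some y ∈ support q
  obtain ⟨y, hyq, hyz⟩ : ∃ y ∈ q.support, (y : V) = z := by
    replace hzp : z ∈ List.map (SimpleGraph.Embedding.induce (G := G) A).toHom q.support := by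
      rw [← Walk.support_map]; exact hzp
    rw [List.mem_map] at hzp
    obtain ⟨y, hy, hyz⟩ := hzp
    exact ⟨y, hy, hyz⟩
  have hzS₀ : z ∈ S₀ := hSsub hzS
  rcases hzS₀ with ⟨w, hwS', hwe⟩ | h
  · have : (w : A) = y := Subtype.val_injective (hwe.trans hyz.symm)
    subst this
    have : w ≠ x := by
      rintro rfl
      exact hxS (hwe ▸ hzS)
    exact hq w hyq ⟨hwS', this⟩
  · exact h (hyz ▸ y.2)
end

section
/- If G is a K_{2,3}-induced-minor-free graph, then the pmc-independence number of G is at most 3. -/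
open SimpleGraph

/-! ## Common definitions -/

variable {V : Type} {W : Type}

namespace K23Aux

/-- Vertices reachable from `w` by walks avoiding `X`. -/
def compOut (G : SimpleGraph V) (X : Set V) (w : V) : Set V :=
  {y | ∃ p : G.Walk w y, ∀ x ∈ p.support, x ∉ X}

lemma mem_compOut_self {G : SimpleGraph V} {X : Set V} {w : V} (hw : w ∉ X) :
    w ∈ compOut G X w :=
  ⟨Walk.nil, by simp [hw]⟩

lemma compOut_not_mem_X {G : SimpleGraph V} {X : Set V} {w y : V}
    (hy : y ∈ compOut G X w) : y ∉ X := by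
  obtain ⟨p, hp⟩ := hy
  exact hp y p.end_mem_support

lemma compOut_start {G : SimpleGraph V} {X : Set V} {w y : V}
    (hy : y ∈ compOut G X w) : w ∉ X := by
  obtain ⟨p, hp⟩ := hy
  exact hp w p.start_mem_support

lemma compOut_eq_of_mem {G : SimpleGraph V} {X : Set V} {w y : V}
    (hy : y ∈ compOut G X w) : compOut G X y = compOut G X w := by
  obtain ⟨p, hp⟩ := hy
  ext z
  constructor
  · rintro ⟨q, hq⟩
    exact ⟨p.append q, by
      intro x hx
      rcases (Walk.mem_support_append_iff _ _).mp hx with h | h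
      exacts [hp x h, hq x h]⟩
  · rintro ⟨q, hq⟩
    exact ⟨p.reverse.append q, by
      intro x hx
      rcases (Walk.mem_support_append_iff _ _).mp hx with h | h
      · exact hp x (by simpa using h)
      · exact hq x h⟩

lemma compOut_adj {G : SimpleGraph V} {X : Set V} {w y z : V}
    (hy : y ∈ compOut G X w) (hadj : G.Adj y z) (hz : z ∉ X) :
    z ∈ compOut G X w := by
  obtain ⟨p, hp⟩ := hy
  refine ⟨p.append (Walk.cons hadj Walk.nil), ?_⟩
  intro x hx
  rcases (Walk.mem_support_append_iff _ _).mp hx with h | h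
  · exact hp x h
  · have : x = y ∨ x = z := by simpa using h
    rcases this with rfl | rfl
    · exact compOut_not_mem_X ⟨p, hp⟩
    · exact hz

/-- Distinct components: if there is an edge between them they are equal. -/
lemma compOut_eq_of_adj {G : SimpleGraph V} {X : Set V} {w₁ w₂ y z : V}
    (hy : y ∈ compOut G X w₁) (hz : z ∈ compOut G X w₂) (hadj : G.Adj y z) :
    compOut G X w₁ = compOut G X w₂ := by
  have hz' : z ∈ compOut G X w₁ := compOut_adj hy hadj (compOut_not_mem_X hz)
  rw [← compOut_eq_of_mem hz', compOut_eq_of_mem hz]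

/-- Walks within the component: every member is reachable from `w` by a walk whose
support stays in the component. -/
lemma compOut_walk_in {G : SimpleGraph V} {X : Set V} {w y : V}
    (hy : y ∈ compOut G X w) :
    ∃ p : G.Walk w y, ∀ x ∈ p.support, x ∈ compOut G X w := by
  classical
  obtain ⟨p, hp⟩ := hy
  refine ⟨p, fun x hx => ?_⟩
  exact ⟨p.takeUntil x hx, fun a ha => hp a (p.support_takeUntil_subset hx ha)⟩

/-- Transfer a walk with support in `S` to reachability in the induced graph. -/
lemma reachable_induce_of_walk {G : SimpleGraph V} {S : Set V} {u v : V}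
    (p : G.Walk u v) (hp : ∀ x ∈ p.support, x ∈ S) (hu : u ∈ S) (hv : v ∈ S) :
    (G.induce S).Reachable ⟨u, hu⟩ ⟨v, hv⟩ := by
  induction p with
  | nil => exact Reachable.refl _
  | @cons a b c h q ih =>
    have hb : b ∈ S := hp b (by simp)
    have h1 : (G.induce S).Adj ⟨a, hu⟩ ⟨b, hb⟩ := h
    exact (h1.reachable).trans (ih (fun x hx => hp x (by simp [hx])) hb hv)

/-- A set with a "center" vertex having in-set walks to all members induces a
connected subgraph. -/
lemma induce_connected_of_center {G : SimpleGraph V} {S : Set V} {c : V} (hc : c ∈ S)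
    (h : ∀ y ∈ S, ∃ p : G.Walk c y, ∀ x ∈ p.support, x ∈ S) :
    (G.induce S).Connected := by
  haveI : Nonempty (S : Set V) := ⟨⟨c, hc⟩⟩
  apply Connected.mk
  rintro ⟨y, hy⟩ ⟨z, hz⟩
  obtain ⟨p, hp⟩ := h y hy
  obtain ⟨q, hq⟩ := h z hz
  exact (reachable_induce_of_walk p hp hc hy).symm.trans
    (reachable_induce_of_walk q hq hc hz)

lemma compOut_connected {G : SimpleGraph V} {X : Set V} {w : V} (hw : w ∉ X) :
    (G.induce (compOut G X w)).Connected :=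
  induce_connected_of_center (mem_compOut_self hw) (fun _ hy => compOut_walk_in hy)



lemma fin_sub_eq_one_iff {n : ℕ} {i j : Fin (n+2)} :
    i - j = 1 ↔ (i.val = j.val + 1 ∨ (j.val = n+1 ∧ i.val = 0)) := by
  have hi := i.is_lt
  have hj := j.is_lt
  rw [Fin.ext_iff, Fin.sub_def]
  simp only [Fin.val_one]
  rcases le_or_gt j.val i.val with h | h
  · have he : ((n+2 - j.val) + i.val) = (n+2) + (i.val - j.val) := by omega
    rw [he, Nat.add_mod_left, Nat.mod_eq_of_lt (by omega)]
    omega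
  · rw [Nat.mod_eq_of_lt (by omega)]
    omega

open Fin.NatCast Fin.CommRing in
lemma cycle_labels {n : ℕ} (LA LS LB : Fin (n+2) → Prop)
    (cover : ∀ i, LA i ∨ LS i ∨ LB i)
    (hAB : ∀ i, LA i → ¬ LB i) (hSB : ∀ i, LS i → ¬ LB i) (hAS : ∀ i, LA i → ¬ LS i)
    (hadjAB : ∀ i j, (cycleGraph (n+2)).Adj i j → LA i → LB j → False)
    (hS : ∀ i j, LS i → LS j → i ≠ j → (cycleGraph (n+2)).Adj i j)
    {a b : Fin (n+2)} (ha : LA a) (hb : LB b) : False := by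
  have hrep : ∀ x : Fin (n+2), a + ((x - a).val : Fin (n+2)) = x := by
    intro x
    rw [Fin.cast_val_eq_self]
    ring
  have hneg : ∀ t : ℕ, t ≤ n+2 → ((n + 2 - t : ℕ) : Fin (n+2)) = - (t : ℕ) := by
    intro t ht
    rw [Nat.cast_sub ht]
    simp
  have hcast0 : ∀ m : ℕ, 0 < m → ((m - 1 : ℕ) : Fin (n+2)) = (m : Fin (n+2)) - 1 := by
    intro m hm
    rw [Nat.cast_sub (by omega)]
    simp
  have hdvd : ∀ K : ℕ, K % (n+2) = 0 → 0 < K → K ≤ n + 3 → K = n + 2 := by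
    intro K h0 h1 h2
    obtain ⟨c, hc⟩ := Nat.dvd_of_mod_eq_zero h0
    match c with
    | 0 => omega
    | 1 => omega
    | (k+2) =>
      exfalso
      have : (n+2) * 2 ≤ (n+2) * (k+2) := Nat.mul_le_mul_left _ (by omega)
      omega
  have hbne : b ≠ a := fun h => hAB a ha (h ▸ hb)
  have hbval : (b - a).val < n + 2 := (b - a).is_lt
  have hvpos : 0 < (b - a).val := by
    rcases Nat.eq_zero_or_pos (b - a).val with h | h
    · exact absurd (sub_eq_zero.mp (by rw [Fin.ext_iff, h]; rfl)) hbne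
    · exact h
  -- minimal positive distance in + direction where LA fails
  have hQ2 : ∃ k : ℕ, 0 < k ∧ ¬ LA (a + (k : Fin (n+2))) :=
    ⟨(b - a).val, hvpos, by rw [hrep b]; exact fun h => hAB b h hb⟩
  have hQ3 : ∃ k : ℕ, 0 < k ∧ ¬ LA (a - (k : Fin (n+2))) := by
    refine ⟨(n + 2) - (b - a).val, by omega, ?_⟩
    rw [hneg _ (by omega), sub_neg_eq_add, hrep b]
    exact fun h => hAB b h hb
  classical
  set m₂ := Nat.find hQ2 with hm₂def
  set m₃ := Nat.find hQ3 with hm₃def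
  obtain ⟨hm₂pos, hm₂⟩ := Nat.find_spec hQ2
  obtain ⟨hm₃pos, hm₃⟩ := Nat.find_spec hQ3
  have LAplus : ∀ k, k < m₂ → LA (a + (k : Fin (n+2))) := by
    intro k hk
    rcases Nat.eq_zero_or_pos k with rfl | hkpos
    · simpa using ha
    · by_contra h
      exact Nat.find_min hQ2 hk ⟨hkpos, h⟩
  have LAminus : ∀ k, k < m₃ → LA (a - (k : Fin (n+2))) := by
    intro k hk
    rcases Nat.eq_zero_or_pos k with rfl | hkpos
    · simpa using ha
    · by_contra h
      exact Nat.find_min hQ3 hk ⟨hkpos, h⟩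
  have hLAx : ∀ x : Fin (n+2), (x - a).val < m₂ ∨ 0 < (x - a).val ∧ n + 2 - (x - a).val < m₃ → LA x := by
    intro x hx
    rcases hx with h | ⟨h0, h⟩
    · have := LAplus _ h; rwa [hrep x] at this
    · have := LAminus _ h
      rwa [hneg _ (by omega), sub_neg_eq_add, hrep x] at this
  have hsum : m₂ + m₃ ≤ n + 2 := by
    by_contra h
    push_neg at h
    have : LA b := hLAx b (by omega)
    exact hAB b this hb
  have hconsec : ∀ x : Fin (n+2), (cycleGraph (n+2)).Adj x (x + 1) := by
    intro x
    rw [cycleGraph_adj]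
    right
    ring
  have hcast1 : ∀ m : ℕ, 0 < m → (a + ((m - 1 : ℕ) : Fin (n+2))) + 1 = a + (m : Fin (n+2)) := by
    intro m hm
    rw [hcast0 m hm]
    ring
  have hS1 : LS (a + (m₂ : Fin (n+2))) := by
    rcases cover (a + (m₂ : Fin (n+2))) with h | h | h
    · exact absurd h hm₂
    · exact h
    · exfalso
      have hadj : (cycleGraph (n+2)).Adj (a + ((m₂ - 1 : ℕ) : Fin (n+2))) (a + (m₂ : Fin (n+2))) := by
        rw [← hcast1 m₂ hm₂pos]; exact hconsec _
      exact hadjAB _ _ hadj (LAplus _ (by omega)) h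
  have hS2 : LS (a - (m₃ : Fin (n+2))) := by
    rcases cover (a - (m₃ : Fin (n+2))) with h | h | h
    · exact absurd h hm₃
    · exact h
    · exfalso
      have heq : (a - (m₃ : Fin (n+2))) + 1 = a - ((m₃ - 1 : ℕ) : Fin (n+2)) := by
        rw [hcast0 m₃ hm₃pos]
        ring
      have hadj : (cycleGraph (n+2)).Adj (a - (m₃ : Fin (n+2)) + 1) (a - (m₃ : Fin (n+2))) := (hconsec _).symm
      rw [heq] at hadj
      exact hadjAB _ _ hadj (LAminus _ (by omega)) h
  have hdiff : (a + (m₂ : Fin (n+2))) - (a - (m₃ : Fin (n+2))) = ((m₂ + m₃ : ℕ) : Fin (n+2)) := by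
    rw [Nat.cast_add]; ring
  by_cases hss : (a + (m₂ : Fin (n+2))) = (a - (m₃ : Fin (n+2)))
  · -- m₂ + m₃ = n+2, all vertices except s1 are LA
    have h0 : ((m₂ + m₃ : ℕ) : Fin (n+2)) = 0 := by rw [← hdiff, hss]; ring
    have hmod : (m₂ + m₃) % (n+2) = 0 := by
      have := Fin.val_natCast (m₂ + m₃) (n+2)
      rw [h0] at this
      simpa using this.symm
    have hsum' : m₂ + m₃ = n + 2 := hdvd _ hmod (by omega) (by omega)
    have hall : ∀ x : Fin (n+2), x ≠ (a + (m₂ : Fin (n+2))) → LA x := by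
      intro x hx
      apply hLAx
      have hlt := (x - a).is_lt
      rcases lt_trichotomy (x - a).val m₂ with h | h | h
      · exact Or.inl h
      · exfalso; apply hx
        rw [← hrep x, h]
      · right; omega
    have : LA b := hall b (fun h => hSB _ hS1 (h ▸ hb))
    exact hAB b this hb
  · have hadj := hS _ _ hS1 hS2 hss
    rw [cycleGraph_adj] at hadj
    rcases hadj with h1 | h1
    · -- (m₂+m₃ : Fin) = 1 : impossible
      rw [hdiff] at h1
      have hval := Fin.val_natCast (m₂ + m₃) (n+2)
      rw [h1] at hval
      simp only [Fin.val_one] at hval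
      rcases lt_or_ge (m₂ + m₃) (n+2) with h | h
      · rw [Nat.mod_eq_of_lt h] at hval; omega
      · have h2 : m₂ + m₃ = n + 2 := le_antisymm hsum h
        rw [h2, Nat.mod_self] at hval; omega
    · -- (m₂+m₃ : Fin) = -1, so m₂ + m₃ = n+1
      have hneg1 : -((m₂ + m₃ : ℕ) : Fin (n+2)) = 1 := by
        rw [← hdiff, ← h1]; ring
      have h2 : ((m₂ + m₃ + 1 : ℕ) : Fin (n+2)) = 0 := by
        rw [Nat.cast_add, Nat.cast_one, ← hneg1]; ring
      have hmod : (m₂ + m₃ + 1) % (n+2) = 0 := by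
        have := Fin.val_natCast (m₂ + m₃ + 1) (n+2)
        rw [h2] at this
        simpa using this.symm
      have hsum' : m₂ + m₃ + 1 = n + 2 := hdvd _ hmod (by omega) (by omega)
      have hall : ∀ x : Fin (n+2), x ≠ (a + (m₂ : Fin (n+2))) → x ≠ (a - (m₃ : Fin (n+2))) → LA x := by
        intro x hx1 hx2
        apply hLAx
        have hlt := (x - a).is_lt
        rcases lt_trichotomy (x - a).val m₂ with h | h | h
        · exact Or.inl h
        · exact absurd (by rw [← hrep x, h]) hx1
        · right
          refine ⟨by omega, ?_⟩
          have hne2 : n + 2 - (x - a).val ≠ m₃ := by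
            intro hEq
            apply hx2
            rw [← hrep x, ← hEq, hneg _ (by omega), sub_neg_eq_add]
          omega
      have : LA b := hall b (fun h => hSB _ hS1 (h ▸ hb)) (fun h => hSB _ hS2 (h ▸ hb))
      exact hAB b this hb



/-! ### The gluing construction -/

/-- Delete the edges of `H` between `A` and `B`. -/
def cutGraph (H : SimpleGraph V) (A B : Set V) : SimpleGraph V where
  Adj x y := H.Adj x y ∧ ¬(x ∈ A ∧ y ∈ B) ∧ ¬(y ∈ A ∧ x ∈ B)
  symm := ⟨by rintro x y ⟨h1, h2, h3⟩; exact ⟨h1.symm, h3, h2⟩⟩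
  loopless := ⟨fun x h => H.loopless.irrefl x h.1⟩

lemma cutGraph_le (H : SimpleGraph V) (A B : Set V) : cutGraph H A B ≤ H :=
  fun _ _ h => h.1

lemma induce_adj' {G : SimpleGraph V} {s : Set V} {a b : ↥s} :
    (G.induce s).Adj a b ↔ G.Adj ↑a ↑b := Iff.rfl

lemma cutGraph_chordal (H : SimpleGraph V) (hH : H.IsChordal) (S A : Set V)
    (hS : H.IsClique S) (hd : ∀ a ∈ A, a ∉ S) :
    (cutGraph H A (A ∪ S)ᶜ).IsChordal := by
  intro n hn U hne
  obtain ⟨e⟩ := hne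
  obtain ⟨m, rfl⟩ : ∃ m, n = m + 2 := ⟨n - 2, by omega⟩
  by_cases hex : (∃ i : Fin (m+2), (↑(e i) : V) ∈ A) ∧ (∃ j : Fin (m+2), (↑(e j) : V) ∈ (A ∪ S)ᶜ)
  · obtain ⟨⟨a, haA⟩, ⟨b, hbB⟩⟩ := hex
    refine cycle_labels (fun i => (↑(e i) : V) ∈ A) (fun i => (↑(e i) : V) ∈ S)
      (fun i => (↑(e i) : V) ∈ (A ∪ S)ᶜ) ?_ ?_ ?_ ?_ ?_ ?_ haA hbB
    · intro i
      by_cases h1 : (↑(e i) : V) ∈ A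
      · exact Or.inl h1
      by_cases h2 : (↑(e i) : V) ∈ S
      · exact Or.inr (Or.inl h2)
      · exact Or.inr (Or.inr (by simp [h1, h2]))
    · intro i hi hB
      exact hB (Or.inl hi)
    · intro i hi hB
      exact hB (Or.inr hi)
    · intro i hi
      exact hd _ hi
    · intro i j hadj hiA hjB
      have h1 : (cutGraph H A (A ∪ S)ᶜ).Adj ↑(e i) ↑(e j) := (e.map_rel_iff.mpr hadj : _)
      exact h1.2.1 ⟨hiA, hjB⟩
    · intro i j hi hj hij
      have hne' : (↑(e i) : V) ≠ ↑(e j) := by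
        intro h
        exact hij (e.toEquiv.injective (Subtype.val_injective h))
      have hH' : H.Adj ↑(e i) ↑(e j) := hS hi hj hne'
      have h1 : (cutGraph H A (A ∪ S)ᶜ).Adj ↑(e i) ↑(e j) :=
        ⟨hH', fun ⟨hA, _⟩ => hd _ hA hi, fun ⟨hA, _⟩ => hd _ hA hj⟩
      exact e.map_rel_iff.mp (h1 : (((cutGraph H A (A ∪ S)ᶜ)).induce U).Adj (e i) (e j))
  · -- no deleted edge can occur inside U, so we get an induced cycle in H itself
    apply hH (m+2) hn U
    rw [not_and_or] at hex
    push_neg at hex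
    have key : ∀ i j : Fin (m+2), H.Adj ↑(e i) ↑(e j) ↔ (cutGraph H A (A ∪ S)ᶜ).Adj ↑(e i) ↑(e j) := by
      intro i j
      constructor
      · intro h
        refine ⟨h, ?_, ?_⟩
        · rintro ⟨h1, h2⟩
          rcases hex with hex | hex
          · exact hex i h1
          · exact hex j h2
        · rintro ⟨h1, h2⟩
          rcases hex with hex | hex
          · exact hex j h1
          · exact hex i h2
      · exact fun h => h.1
    exact ⟨{ toEquiv := e.toEquiv,
             map_rel_iff' := by
               intro i j
               rw [← e.map_rel_iff]
               exact (induce_adj'.trans (key i j)).trans induce_adj'.symm }⟩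

/-! ### getVert injectivity on paths -/

lemma getVert_inj_of_isPath {G : SimpleGraph V} {u v : V} {p : G.Walk u v} (hp : p.IsPath) :
    ∀ {i j : ℕ}, i ≤ p.length → j ≤ p.length → p.getVert i = p.getVert j → i = j := by
  induction p with
  | nil => intro i j hi hj _; simp at hi hj; omega
  | @cons a b c h q ih =>
    intro i j hi hj hij
    rw [Walk.cons_isPath_iff] at hp
    match i, j with
    | 0, 0 => rfl
    | 0, (j+1) =>
      exfalso
      apply hp.2
      rw [Walk.mem_support_iff_exists_getVert]
      refine ⟨j, ?_, by simpa [Walk.length_cons] using hj⟩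
      simpa using hij.symm
    | (i+1), 0 =>
      exfalso
      apply hp.2
      rw [Walk.mem_support_iff_exists_getVert]
      refine ⟨i, ?_, by simpa [Walk.length_cons] using hi⟩
      simpa using hij
    | (i+1), (j+1) =>
      have := ih hp.1 (by simpa [Walk.length_cons] using hi)
        (by simpa [Walk.length_cons] using hj) (by simpa using hij)
      omega

/-! ### Subwalk extraction -/

lemma exists_subwalk {G : SimpleGraph V} {u v : V} (p : G.Walk u v) :
    ∀ i j : ℕ, i ≤ j → j ≤ p.length →
    ∃ q : G.Walk (p.getVert i) (p.getVert j), q.length = j - i ∧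
      ∀ x ∈ q.support, ∃ k, i ≤ k ∧ k ≤ j ∧ p.getVert k = x := by
  induction p with
  | nil =>
    intro i j hij hj
    simp only [Walk.length_nil, Nat.le_zero] at hj
    subst hj
    interval_cases i
    refine ⟨Walk.nil, by simp, fun x hx => ⟨0, le_refl _, le_refl _, ?_⟩⟩
    simp only [Walk.support_nil, List.mem_singleton] at hx
    simp [hx]
  | @cons a b c h q ih =>
    intro i j hij hj
    match i, j with
    | 0, 0 =>
      refine ⟨Walk.nil, by simp, fun x hx => ⟨0, le_refl _, le_refl _, ?_⟩⟩
      simp only [Walk.support_nil, List.mem_singleton] at hx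
      simp [hx]
    | 0, (j+1) =>
      obtain ⟨q1, hq1len, hq1sup⟩ := ih 0 j (by omega) (by simpa [Walk.length_cons] using hj)
      refine ⟨Walk.cons h (q1.copy (Walk.getVert_zero q) rfl), by show (q1.copy _ _).length + 1 = j + 1; simp [hq1len], ?_⟩
      intro x hx
      change x ∈ a :: (q1.copy _ _).support at hx
      rcases List.mem_cons.mp hx with rfl | hx
      · exact ⟨0, le_refl _, by omega, rfl⟩
      · obtain ⟨k, hk1, hk2, hk3⟩ := hq1sup x (by simpa using hx)
        exact ⟨k + 1, by omega, by omega, hk3⟩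
    | (i+1), (j+1) =>
      obtain ⟨q1, hq1len, hq1sup⟩ := ih i j (by omega) (by simpa [Walk.length_cons] using hj)
      refine ⟨q1, by simpa using hq1len, ?_⟩
      intro x hx
      obtain ⟨k, hk1, hk2, hk3⟩ := hq1sup x hx
      exact ⟨k + 1, by omega, by omega, hk3⟩

/-! ### Cliquishness of potential maximal cliques -/

lemma cliquish {G H : SimpleGraph V} (hmin : G.IsMinimalTriangulation H)
    {X : Set V} (hXcl : H.IsClique X) {u v : V} (hu : u ∈ X) (hv : v ∈ X)
    (huv : u ≠ v) (hnadj : ¬ G.Adj u v) :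
    ∃ w, w ∉ X ∧ (∃ y ∈ compOut G X w, G.Adj u y) ∧ (∃ z ∈ compOut G X w, G.Adj v z) := by
  classical
  obtain ⟨hle, hch, hminimal⟩ := hmin
  set S : Set V := X \ {u, v} with hSdef
  have huS : u ∉ S := by simp [hSdef]
  have hvS : v ∉ S := by simp [hSdef]
  by_cases hvA : v ∈ compOut G S u
  · -- extract a path from u to v with interior outside X
    obtain ⟨p0, hp0⟩ := hvA
    set p := p0.bypass with hpdef
    have hpath : p.IsPath := Walk.bypass_isPath p0
    have hsupp : ∀ x ∈ p.support, x ∉ S := fun x hx =>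
      hp0 x (Walk.support_bypass_subset p0 hx)
    have hlen2 : 2 ≤ p.length := by
      by_contra hcon
      push_neg at hcon
      interval_cases hL : p.length
      · exact huv (Walk.eq_of_length_eq_zero hL)
      · exact hnadj (Walk.adj_of_length_eq_one hL)
    -- interior vertices are outside X
    have hinterior : ∀ k, 1 ≤ k → k ≤ p.length - 1 → p.getVert k ∉ X := by
      intro k hk1 hk2 hX
      have hkmem : p.getVert k ∈ p.support := by
        rw [Walk.mem_support_iff_exists_getVert]
        exact ⟨k, rfl, by omega⟩
      have hku : p.getVert k ≠ u := by
        intro hEq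
        have : k = 0 := getVert_inj_of_isPath hpath (by omega) (by omega) (by simpa using hEq)
        omega
      have hkv : p.getVert k ≠ v := by
        intro hEq
        have : k = p.length := getVert_inj_of_isPath hpath (by omega) (by omega) (by simpa using hEq)
        omega
      exact hsupp _ hkmem ⟨hX, by simp [hku, hkv]⟩
    have hwX : p.getVert 1 ∉ X := hinterior 1 (le_refl _) (by omega)
    have hadjuw : G.Adj u (p.getVert 1) := by
      have := p.adj_getVert_succ (i := 0) (by omega)
      simpa using this
    have hadjzv : G.Adj (p.getVert (p.length - 1)) v := by
      have := p.adj_getVert_succ (i := p.length - 1) (by omega)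
      have h2 : p.length - 1 + 1 = p.length := by omega
      rw [h2] at this
      simpa using this
    obtain ⟨mwalk, _, hmsup⟩ := exists_subwalk p 1 (p.length - 1) (by omega) (by omega)
    refine ⟨p.getVert 1, hwX, ⟨p.getVert 1, mem_compOut_self hwX, hadjuw⟩,
      ⟨p.getVert (p.length - 1), ⟨mwalk, ?_⟩, hadjzv.symm⟩⟩
    intro x hx
    obtain ⟨k, hk1, hk2, hk3⟩ := hmsup x hx
    exact hk3 ▸ hinterior k hk1 hk2
  · -- otherwise X \ {u,v} separates u from v ; contradict minimality via the cut graph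
    set A : Set V := compOut G S u with hAdef
    set H₁ : SimpleGraph V := cutGraph H A (A ∪ S)ᶜ with hH₁def
    have hGH₁ : G ≤ H₁ := by
      intro x y hxy
      refine ⟨hle hxy, ?_, ?_⟩
      · rintro ⟨hxA, hyB⟩
        simp only [Set.mem_compl_iff, Set.mem_union, not_or] at hyB
        exact hyB.1 (compOut_adj hxA hxy hyB.2)
      · rintro ⟨hyA, hxB⟩
        simp only [Set.mem_compl_iff, Set.mem_union, not_or] at hxB
        exact hxB.1 (compOut_adj hyA hxy.symm hxB.2)
    have huvH : H.Adj u v := hXcl hu hv huv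
    have hnuv : ¬ H₁.Adj u v := by
      rintro ⟨_, h2, _⟩
      apply h2
      refine ⟨mem_compOut_self huS, ?_⟩
      simp only [Set.mem_compl_iff, Set.mem_union, not_or]
      exact ⟨hvA, hvS⟩
    have hlt : H₁ < H := by
      rcases lt_or_eq_of_le (cutGraph_le H A (A ∪ S)ᶜ) with h | h
      · exact h
      · exact absurd (show H₁.Adj u v by rw [hH₁def, h]; exact huvH) hnuv
    exact (hminimal H₁ hGH₁
      (cutGraph_chordal H hch S A (hXcl.subset Set.diff_subset)
        (fun a ha => compOut_not_mem_X ha)) hlt).elim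



/-! ### Distance within a set -/

/-- The set of lengths of walks from `y` to `z` staying inside `D`. -/
def walkLens (H : SimpleGraph V) (D : Set V) (y z : V) : Set ℕ :=
  {k | ∃ p : H.Walk y z, p.length = k ∧ ∀ x ∈ p.support, x ∈ D}

noncomputable def distIn (H : SimpleGraph V) (D : Set V) (y z : V) : ℕ :=
  sInf (walkLens H D y z)

lemma distIn_exists {H : SimpleGraph V} {D : Set V} {y z : V}
    (h : (walkLens H D y z).Nonempty) :
    ∃ p : H.Walk y z, p.length = distIn H D y z ∧ ∀ x ∈ p.support, x ∈ D :=
  Nat.sInf_mem h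

lemma distIn_le {H : SimpleGraph V} {D : Set V} {y z : V} (p : H.Walk y z)
    (hp : ∀ x ∈ p.support, x ∈ D) : distIn H D y z ≤ p.length :=
  Nat.sInf_le ⟨p, rfl, hp⟩

lemma distIn_self {H : SimpleGraph V} {D : Set V} {y : V} (hy : y ∈ D) :
    distIn H D y y = 0 :=
  Nat.le_zero.mp (distIn_le Walk.nil (by simpa using hy))

lemma eq_of_distIn_zero {H : SimpleGraph V} {D : Set V} {y z : V}
    (h : (walkLens H D y z).Nonempty) (h0 : distIn H D y z = 0) : y = z := by
  obtain ⟨p, hlen, -⟩ := distIn_exists h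
  exact Walk.eq_of_length_eq_zero (hlen.trans h0)

/-! ### In a chordal graph, no maximal clique is dominated by a disjoint connected set -/

lemma clique_not_dominated {H : SimpleGraph V} [Fintype V] (hch : H.IsChordal)
    {X : Set V} (hXcl : H.IsClique X)
    (hmax : ∀ Y : Set V, H.IsClique Y → X ⊆ Y → Y = X) :
    ∀ D : Set V, (∀ y ∈ D, y ∉ X) → D.Nonempty →
      (∀ y ∈ D, ∀ z ∈ D, ∃ p : H.Walk y z, ∀ x ∈ p.support, x ∈ D) →
      ¬ (∀ x ∈ X, ∃ y ∈ D, H.Adj x y) := by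
  classical
  suffices hsuff : ∀ n : ℕ, ∀ D : Set V, D.ncard ≤ n → (∀ y ∈ D, y ∉ X) → D.Nonempty →
      (∀ y ∈ D, ∀ z ∈ D, ∃ p : H.Walk y z, ∀ x ∈ p.support, x ∈ D) →
      ¬ (∀ x ∈ X, ∃ y ∈ D, H.Adj x y) by
    intro D
    exact hsuff D.ncard D le_rfl
  intro n
  induction n with
  | zero =>
    intro D hcard hDX hne hconn hdom
    rw [Nat.le_zero, Set.ncard_eq_zero D.toFinite] at hcard
    exact Set.not_nonempty_empty (hcard ▸ hne)
  | succ n ih =>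
    intro D hcard hDX hne hconn hdom
    obtain ⟨w0, hw0⟩ := hne
    -- Case 0 : some vertex of D dominates all of X
    by_cases hdall : ∃ d ∈ D, ∀ x ∈ X, H.Adj x d
    · obtain ⟨d, hd, hdadj⟩ := hdall
      have hclq : H.IsClique (insert d X) := by
        intro a ha b hb hab
        rcases Set.mem_insert_iff.mp ha with rfl | haX
        · rcases Set.mem_insert_iff.mp hb with rfl | hbX
          · exact absurd rfl hab
          · exact (hdadj b hbX).symm
        · rcases Set.mem_insert_iff.mp hb with rfl | hbX
          · exact hdadj a haX
          · exact hXcl haX hbX hab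
      have := hmax _ hclq (Set.subset_insert d X)
      exact hDX d hd (this ▸ Set.mem_insert d X)
    -- otherwise every vertex of D misses some x, and in particular X ≠ ∅
    push_neg at hdall
    -- D has at least two points
    by_cases hsingle : ∀ y ∈ D, y = w0
    · exfalso
      obtain ⟨x, hxX, hnadj⟩ := hdall w0 hw0
      obtain ⟨y, hy, hadj⟩ := hdom x hxX
      exact hnadj ((hsingle y hy) ▸ hadj)
    push_neg at hsingle
    obtain ⟨b0, hb0D, hb0⟩ := hsingle
    -- walkLens are nonempty within D
    have hwl : ∀ y ∈ D, ∀ z ∈ D, (walkLens H D y z).Nonempty := by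
      intro y hy z hz
      obtain ⟨p, hp⟩ := hconn y hy z hz
      exact ⟨p.length, p, rfl, hp⟩
    -- the farthest point from any base point is not a cut vertex
    have hfar : ∀ r ∈ D, ∃ d ∈ D, d ≠ r ∧
        (∀ y ∈ D, y ≠ d → ∃ p : H.Walk r y, ∀ x ∈ p.support, x ∈ D ∧ x ≠ d) := by
      intro r hr
      obtain ⟨d, hdD, hdmax'⟩ := Set.Finite.exists_maximalFor (fun y => distIn H D r y) D
        D.toFinite ⟨w0, hw0⟩
      have hdmax : ∀ y ∈ D, distIn H D r y ≤ distIn H D r d := by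
        intro y hy
        rcases le_total (distIn H D r y) (distIn H D r d) with h | h
        · exact h
        · exact hdmax' hy h
      have hdr : d ≠ r := by
        intro hEq
        subst hEq
        -- then all distances are 0, so D = {d}, contradiction with b0 or hb0...
        have h1 : ∀ y ∈ D, y = d := by
          intro y hy
          have h0 : distIn H D d y = 0 :=
            Nat.le_zero.mp ((hdmax y hy).trans_eq (distIn_self hdD))
          exact (eq_of_distIn_zero (hwl d hdD y hy) h0).symm
        -- both w0 and b0 equal d
        exact hb0 ((h1 b0 hb0D).trans (h1 w0 hw0).symm)
      refine ⟨d, hdD, hdr, ?_⟩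
      intro y hy hyd
      obtain ⟨p, hplen, hpsup⟩ := distIn_exists (hwl r hr y hy)
      have hdns : d ∉ p.support := by
        intro hmem
        have hspec := p.take_spec hmem
        have hlen : (p.takeUntil d hmem).length + (p.dropUntil d hmem).length = p.length := by
          rw [← Walk.length_append, hspec]
        have hd1 : distIn H D r d ≤ (p.takeUntil d hmem).length :=
          distIn_le _ (fun x hx => hpsup x (p.support_takeUntil_subset hmem hx))
        have hd2 : (p.dropUntil d hmem).length ≠ 0 := by
          intro h0
          exact hyd (Walk.eq_of_length_eq_zero h0).symm
        have := hdmax y hy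
        omega
      exact ⟨p, fun x hx => ⟨hpsup x hx, fun hEq => hdns (hEq ▸ hx)⟩⟩
    -- obtain two far vertices with private neighbours
    have hpriv : ∀ r ∈ D, ∃ d ∈ D, d ≠ r ∧ ∃ x ∈ X, H.Adj x d ∧
        (∀ y ∈ D, H.Adj x y → y = d) := by
      intro r hr
      obtain ⟨d, hdD, hdr, hdwalks⟩ := hfar r hr
      -- connectivity of D \ {d}
      have hconn' : ∀ y ∈ D \ {d}, ∀ z ∈ D \ {d},
          ∃ p : H.Walk y z, ∀ x ∈ p.support, x ∈ D \ {d} := by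
        rintro y ⟨hyD, hy⟩ z ⟨hzD, hz⟩
        simp only [Set.mem_singleton_iff] at hy hz
        obtain ⟨p1, hp1⟩ := hdwalks y hyD hy
        obtain ⟨p2, hp2⟩ := hdwalks z hzD hz
        refine ⟨p1.reverse.append p2, ?_⟩
        intro x hx
        rcases (Walk.mem_support_append_iff _ _).mp hx with h | h
        · have := hp1 x (by simpa using h)
          exact ⟨this.1, this.2⟩
        · have := hp2 x h
          exact ⟨this.1, this.2⟩
      -- domination by D \ {d} must fail, else we recurse
      by_cases hdom' : ∀ x ∈ X, ∃ y ∈ D \ {d}, H.Adj x y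
      · exfalso
        have hlt : (D \ {d}).ncard ≤ n := by
          have := Set.ncard_diff_singleton_lt_of_mem hdD D.toFinite
          omega
        have hne' : (D \ {d}).Nonempty := by
          obtain ⟨x0, hx0⟩ := hdall d hdD
          obtain ⟨y, hy, -⟩ := hdom' x0 hx0.1
          exact ⟨y, hy⟩
        exact ih (D \ {d}) hlt (fun y hy => hDX y hy.1) hne' hconn' hdom'
      · push_neg at hdom'
        obtain ⟨x, hxX, hxpriv⟩ := hdom'
        obtain ⟨y0, hy0D, hy0adj⟩ := hdom x hxX
        have hy0d : y0 = d := by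
          by_contra hne'
          exact hxpriv y0 ⟨hy0D, by simpa using hne'⟩ hy0adj
        refine ⟨d, hdD, hdr, x, hxX, hy0d ▸ hy0adj, ?_⟩
        intro y hyD hyadj
        by_contra hne'
        exact hxpriv y ⟨hyD, by simpa using hne'⟩ hyadj
    -- get d1 with private x1
    obtain ⟨d1, hd1D, -, x1, hx1X, hx1adj, hx1priv⟩ := hpriv w0 hw0
    obtain ⟨d2, hd2D, hd21, x2, hx2X, hx2adj, hx2priv⟩ := hpriv d1 hd1D
    have hx12 : x1 ≠ x2 := by
      intro hEq
      subst hEq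
      exact hd21 (hx1priv d2 hd2D hx2adj)
    have hadjx12 : H.Adj x1 x2 := hXcl hx1X hx2X hx12
    -- shortest path between d1 and d2 inside D
    obtain ⟨p0, hp0len, hp0sup⟩ := distIn_exists (hwl d1 hd1D d2 hd2D)
    set L := distIn H D d1 d2 with hLdef
    have hL1 : 1 ≤ L := by
      rcases Nat.eq_zero_or_pos L with h0 | h
      · exact absurd (eq_of_distIn_zero (hwl d1 hd1D d2 hd2D) h0).symm hd21
      · exact h
    set pp := p0.bypass with hppdef
    have hpath : pp.IsPath := Walk.bypass_isPath p0
    have hppsup : ∀ x ∈ pp.support, x ∈ D := fun x hx =>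
      hp0sup x (Walk.support_bypass_subset p0 hx)
    have hpplen : pp.length = L := by
      have h1 : pp.length ≤ p0.length := Walk.length_bypass_le p0
      have h2 : L ≤ pp.length := distIn_le pp hppsup
      omega
    have hppvertD : ∀ k, k ≤ L → pp.getVert k ∈ D := by
      intro k hk
      apply hppsup
      rw [Walk.mem_support_iff_exists_getVert]
      exact ⟨k, rfl, by omega⟩
    have e1 : pp.getVert 0 = d1 := Walk.getVert_zero pp
    have e2 : pp.getVert L = d2 := by rw [← hpplen]; exact Walk.getVert_length pp
    -- chord-freeness of the shortest path
    have hchordfree : ∀ i j : ℕ, i + 2 ≤ j → j ≤ L → ¬ H.Adj (pp.getVert i) (pp.getVert j) := by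
      intro i j hij hj hadj
      obtain ⟨q1, hq1len, hq1sup⟩ := exists_subwalk pp 0 i (by omega) (by omega)
      obtain ⟨q2, hq2len, hq2sup⟩ := exists_subwalk pp j L (by omega) (by omega)
      have hq2' : pp.getVert L = d2 := e2
      set q : H.Walk d1 d2 := ((q1.copy (Walk.getVert_zero pp) rfl).append
        (Walk.cons hadj (q2.copy rfl e2))) with hqdef
      have hqlen : q.length = i + 1 + (L - j) := by
        simp only [hqdef, Walk.length_append, Walk.length_cons, Walk.length_copy]
        omega
      have hqsup : ∀ x ∈ q.support, x ∈ D := by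
        intro x hx
        rw [hqdef] at hx
        rcases (Walk.mem_support_append_iff _ _).mp hx with h | h
        · rw [Walk.support_copy] at h
          obtain ⟨k, -, hk2, hk3⟩ := hq1sup x h
          exact hk3 ▸ hppvertD k (by omega)
        · rw [Walk.support_cons] at h
          rcases List.mem_cons.mp h with rfl | h
          · exact hppvertD i (by omega)
          · rw [Walk.support_copy] at h
            obtain ⟨k, hk1, hk2, hk3⟩ := hq2sup x h
            exact hk3 ▸ hppvertD k (by omega)
      have := distIn_le q hqsup
      omega
    have hconsecadj : ∀ k : ℕ, k < L → H.Adj (pp.getVert k) (pp.getVert (k+1)) := by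
      intro k hk
      exact pp.adj_getVert_succ (by omega)
    have hgetinj : ∀ i j : ℕ, i ≤ L → j ≤ L → pp.getVert i = pp.getVert j → i = j := by
      intro i j hi hj h
      exact getVert_inj_of_isPath hpath (by omega) (by omega) h
    -- the induced cycle
    set c : Fin (L+3) → V := fun i =>
      if i.val ≤ L then pp.getVert i.val else if i.val = L+1 then x2 else x1 with hcdef
    have hceval1 : ∀ i : Fin (L+3), i.val ≤ L → c i = pp.getVert i.val := by
      intro i h
      rw [hcdef]
      exact if_pos h
    have hceval2 : ∀ i : Fin (L+3), i.val = L+1 → c i = x2 := by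
      intro i h
      rw [hcdef]
      simp only
      rw [if_neg (by omega), if_pos h]
    have hceval3 : ∀ i : Fin (L+3), i.val = L+2 → c i = x1 := by
      intro i h
      rw [hcdef]
      simp only
      rw [if_neg (by omega), if_neg (by omega)]
    have htri : ∀ i : Fin (L+3), i.val ≤ L ∨ i.val = L+1 ∨ i.val = L+2 := by
      intro i
      have := i.is_lt
      omega
    have hXnotD : ∀ x ∈ X, x ∉ D := fun x hx hD' => hDX _ hD' hx
    have hcinj : Function.Injective c := by
      intro i j hEq
      rcases htri i with hi | hi | hi <;> rcases htri j with hj | hj | hj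
      · rw [hceval1 i hi, hceval1 j hj] at hEq
        exact Fin.ext (hgetinj _ _ hi hj hEq)
      · rw [hceval1 i hi, hceval2 j hj] at hEq
        exact absurd (hEq ▸ hppvertD _ hi) (hXnotD x2 hx2X)
      · rw [hceval1 i hi, hceval3 j hj] at hEq
        exact absurd (hEq ▸ hppvertD _ hi) (hXnotD x1 hx1X)
      · rw [hceval2 i hi, hceval1 j hj] at hEq
        exact absurd (hEq ▸ hppvertD _ hj) (hXnotD x2 hx2X)
      · exact Fin.ext (by omega)
      · rw [hceval2 i hi, hceval3 j hj] at hEq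
        exact absurd hEq.symm hx12
      · rw [hceval3 i hi, hceval1 j hj] at hEq
        exact absurd (hEq ▸ hppvertD _ hj) (hXnotD x1 hx1X)
      · rw [hceval3 i hi, hceval2 j hj] at hEq
        exact absurd hEq hx12
      · exact Fin.ext (by omega)
    have hcyc : ∀ i j : Fin (L+3), (cycleGraph (L+3)).Adj i j ↔
        (i.val + 1 = j.val ∨ j.val + 1 = i.val ∨
          (i.val = 0 ∧ j.val = L+2) ∨ (j.val = 0 ∧ i.val = L+2)) := by
      intro i j
      rw [show (L+3) = (L+1)+2 from by omega] at *
      rw [cycleGraph_adj, fin_sub_eq_one_iff, fin_sub_eq_one_iff]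
      omega
    have hkey : ∀ i j : Fin (L+3), i.val ≤ j.val →
        (H.Adj (c i) (c j) ↔ (cycleGraph (L+3)).Adj i j) := by
      intro i j hij
      rw [hcyc]
      rcases htri i with hi | hi | hi <;> rcases htri j with hj | hj | hj
      · rw [hceval1 i hi, hceval1 j hj]
        constructor
        · intro hadj
          by_cases hEq : i.val = j.val
          · rw [hEq] at hadj
            exact absurd hadj (H.loopless.irrefl _)
          by_cases hsucc : i.val + 1 = j.val
          · exact Or.inl hsucc
          · exact absurd hadj (hchordfree i.val j.val (by omega) (by omega))
        · intro h
          have hsucc : i.val + 1 = j.val := by omega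
          have := hconsecadj i.val (by omega)
          rwa [hsucc] at this
      · rw [hceval1 i hi, hceval2 j hj]
        constructor
        · intro hadj
          have h2 : pp.getVert i.val = d2 := hx2priv _ (hppvertD _ hi) hadj.symm
          have h3 : i.val = L := hgetinj _ _ hi le_rfl (by rw [h2, e2])
          omega
        · intro h
          have h3 : i.val = L := by omega
          rw [h3, e2]
          exact hx2adj.symm
      · rw [hceval1 i hi, hceval3 j hj]
        constructor
        · intro hadj
          have h2 : pp.getVert i.val = d1 := hx1priv _ (hppvertD _ hi) hadj.symm
          have h3 : i.val = 0 := hgetinj _ _ hi (by omega) (by rw [h2, e1])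
          omega
        · intro h
          have h3 : i.val = 0 := by omega
          rw [h3, e1]
          exact hx1adj.symm
      · exact absurd hij (by omega)
      · rw [hceval2 i hi, hceval2 j hj]
        constructor
        · intro hadj
          exact absurd hadj (H.loopless.irrefl _)
        · intro h
          omega
      · rw [hceval2 i hi, hceval3 j hj]
        constructor
        · intro _
          omega
        · intro _
          exact hadjx12.symm
      · exact absurd hij (by omega)
      · exact absurd hij (by omega)
      · rw [hceval3 i hi, hceval3 j hj]
        constructor
        · intro hadj
          exact absurd hadj (H.loopless.irrefl _)
        · intro h
          omega
    -- assemble the graph isomorphism and contradict chordality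
    refine absurd ?_ (hch (L+3) (by omega) (Set.range c))
    have hsymm : ∀ i j : Fin (L+3), H.Adj (c i) (c j) ↔ (cycleGraph (L+3)).Adj i j := by
      intro i j
      rcases le_total i.val j.val with h | h
      · exact hkey i j h
      · rw [H.adj_comm, (cycleGraph (L+3)).adj_comm]
        exact hkey j i h
    exact ⟨{ toEquiv := Equiv.ofInjective c hcinj,
             map_rel_iff' := by
               intro i j
               exact (induce_adj').trans (hsymm i j) }⟩

/-! ### No full component for a maximal clique of a minimal triangulation -/

lemma compOut_mono_le {G H : SimpleGraph V} (hle : G ≤ H) (X : Set V) (w : V) :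
    compOut G X w ⊆ compOut H X w := by
  rintro y ⟨p, hp⟩
  refine ⟨p.mapLe hle, ?_⟩
  intro x hx
  rw [Walk.mapLe, Walk.support_map] at hx
  obtain ⟨a, ha, rfl⟩ := List.mem_map.mp hx
  exact hp a ha

lemma exists_nonneighbor {G H : SimpleGraph V} [Fintype V] (hmin : G.IsMinimalTriangulation H)
    {X : Set V} (hXcl : H.IsClique X) (hmax : ∀ Y : Set V, H.IsClique Y → X ⊆ Y → Y = X)
    {w : V} (hw : w ∉ X) :
    ∃ x ∈ X, ∀ y ∈ compOut G X w, ¬ G.Adj x y := by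
  obtain ⟨hle, hch, -⟩ := hmin
  have hconn : ∀ y ∈ compOut H X w, ∀ z ∈ compOut H X w,
      ∃ p : H.Walk y z, ∀ x ∈ p.support, x ∈ compOut H X w := by
    intro y hy z hz
    obtain ⟨p1, hp1⟩ := compOut_walk_in hy
    obtain ⟨p2, hp2⟩ := compOut_walk_in hz
    refine ⟨p1.reverse.append p2, fun x hx => ?_⟩
    rcases (Walk.mem_support_append_iff _ _).mp hx with h | h
    · exact hp1 x (by simpa using h)
    · exact hp2 x h
  have hD := clique_not_dominated hch hXcl hmax (compOut H X w)
    (fun y hy => compOut_not_mem_X hy) ⟨w, mem_compOut_self hw⟩ hconn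
  push_neg at hD
  obtain ⟨x, hxX, hxpriv⟩ := hD
  refine ⟨x, hxX, ?_⟩
  intro y hy hadj
  exact hxpriv y (compOut_mono_le hle X w hy) (hle hadj)

/-! ### Building an induced `K_{2,3}` minor from branch sets -/

lemma induce_singleton_connected (G : SimpleGraph V) (v : V) :
    (G.induce {v}).Connected := by
  apply induce_connected_of_center (c := v) (Set.mem_singleton v)
  intro y hy
  rcases Set.mem_singleton_iff.mp hy with rfl
  exact ⟨Walk.nil, by simp⟩

lemma hasInducedMinor_K23 {G : SimpleGraph V} {L1 L2 R1 R2 R3 : Set V}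
    (hc1 : (G.induce L1).Connected) (hc2 : (G.induce L2).Connected)
    (hc3 : (G.induce R1).Connected) (hc4 : (G.induce R2).Connected)
    (hc5 : (G.induce R3).Connected)
    (dLL : Disjoint L1 L2)
    (dL1R1 : Disjoint L1 R1) (dL1R2 : Disjoint L1 R2) (dL1R3 : Disjoint L1 R3)
    (dL2R1 : Disjoint L2 R1) (dL2R2 : Disjoint L2 R2) (dL2R3 : Disjoint L2 R3)
    (dR12 : Disjoint R1 R2) (dR13 : Disjoint R1 R3) (dR23 : Disjoint R2 R3)
    (nLL : ¬ ∃ a ∈ L1, ∃ b ∈ L2, G.Adj a b)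
    (nR12 : ¬ ∃ a ∈ R1, ∃ b ∈ R2, G.Adj a b)
    (nR13 : ¬ ∃ a ∈ R1, ∃ b ∈ R3, G.Adj a b)
    (nR23 : ¬ ∃ a ∈ R2, ∃ b ∈ R3, G.Adj a b)
    (e11 : ∃ a ∈ L1, ∃ b ∈ R1, G.Adj a b) (e12 : ∃ a ∈ L1, ∃ b ∈ R2, G.Adj a b)
    (e13 : ∃ a ∈ L1, ∃ b ∈ R3, G.Adj a b)
    (e21 : ∃ a ∈ L2, ∃ b ∈ R1, G.Adj a b) (e22 : ∃ a ∈ L2, ∃ b ∈ R2, G.Adj a b)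
    (e23 : ∃ a ∈ L2, ∃ b ∈ R3, G.Adj a b) :
    G.HasInducedMinor (K2q 3) := by
  have exsymm : ∀ (S T : Set V), (∃ a ∈ S, ∃ b ∈ T, G.Adj a b) → (∃ a ∈ T, ∃ b ∈ S, G.Adj a b) := by
    rintro S T ⟨a, ha, b, hb, hab⟩
    exact ⟨b, hb, a, ha, hab.symm⟩
  have nsymm : ∀ (S T : Set V), (¬ ∃ a ∈ S, ∃ b ∈ T, G.Adj a b) → ¬ (∃ a ∈ T, ∃ b ∈ S, G.Adj a b) :=
    fun S T h h2 => h (exsymm T S h2)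
  refine ⟨Sum.elim ![L1, L2] ![R1, R2, R3], ?_, ?_, ?_⟩
  · rintro (i | j)
    · fin_cases i
      · exact hc1
      · exact hc2
    · fin_cases j
      · exact hc3
      · exact hc4
      · exact hc5
  · rintro (i | i) (j | j) hne
    · fin_cases i <;> fin_cases j
      · exact absurd rfl hne
      · exact dLL
      · exact dLL.symm
      · exact absurd rfl hne
    · fin_cases i <;> fin_cases j
      · exact dL1R1
      · exact dL1R2
      · exact dL1R3
      · exact dL2R1
      · exact dL2R2
      · exact dL2R3
    · fin_cases i <;> fin_cases j
      · exact dL1R1.symm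
      · exact dL2R1.symm
      · exact dL1R2.symm
      · exact dL2R2.symm
      · exact dL1R3.symm
      · exact dL2R3.symm
    · fin_cases i <;> fin_cases j
      · exact absurd rfl hne
      · exact dR12
      · exact dR13
      · exact dR12.symm
      · exact absurd rfl hne
      · exact dR23
      · exact dR13.symm
      · exact dR23.symm
      · exact absurd rfl hne
  · rintro (i | i) (j | j) hne
    · fin_cases i <;> fin_cases j
      · exact absurd rfl hne
      · exact iff_of_false (by rintro (⟨h1, h2⟩ | ⟨h1, h2⟩) <;> simp at h1 h2) nLL
      · exact iff_of_false (by rintro (⟨h1, h2⟩ | ⟨h1, h2⟩) <;> simp at h1 h2) (nsymm _ _ nLL)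
      · exact absurd rfl hne
    · fin_cases i <;> fin_cases j
      · exact iff_of_true (Or.inl ⟨rfl, rfl⟩) e11
      · exact iff_of_true (Or.inl ⟨rfl, rfl⟩) e12
      · exact iff_of_true (Or.inl ⟨rfl, rfl⟩) e13
      · exact iff_of_true (Or.inl ⟨rfl, rfl⟩) e21
      · exact iff_of_true (Or.inl ⟨rfl, rfl⟩) e22
      · exact iff_of_true (Or.inl ⟨rfl, rfl⟩) e23
    · fin_cases i <;> fin_cases j
      · exact iff_of_true (Or.inr ⟨rfl, rfl⟩) (exsymm _ _ e11)
      · exact iff_of_true (Or.inr ⟨rfl, rfl⟩) (exsymm _ _ e21)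
      · exact iff_of_true (Or.inr ⟨rfl, rfl⟩) (exsymm _ _ e12)
      · exact iff_of_true (Or.inr ⟨rfl, rfl⟩) (exsymm _ _ e22)
      · exact iff_of_true (Or.inr ⟨rfl, rfl⟩) (exsymm _ _ e13)
      · exact iff_of_true (Or.inr ⟨rfl, rfl⟩) (exsymm _ _ e23)
    · fin_cases i <;> fin_cases j
      · exact absurd rfl hne
      · exact iff_of_false (by rintro (⟨h1, h2⟩ | ⟨h1, h2⟩) <;> simp at h1 h2) nR12
      · exact iff_of_false (by rintro (⟨h1, h2⟩ | ⟨h1, h2⟩) <;> simp at h1 h2) nR13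
      · exact iff_of_false (by rintro (⟨h1, h2⟩ | ⟨h1, h2⟩) <;> simp at h1 h2) (nsymm _ _ nR12)
      · exact absurd rfl hne
      · exact iff_of_false (by rintro (⟨h1, h2⟩ | ⟨h1, h2⟩) <;> simp at h1 h2) nR23
      · exact iff_of_false (by rintro (⟨h1, h2⟩ | ⟨h1, h2⟩) <;> simp at h1 h2) (nsymm _ _ nR13)
      · exact iff_of_false (by rintro (⟨h1, h2⟩ | ⟨h1, h2⟩) <;> simp at h1 h2) (nsymm _ _ nR23)
      · exact absurd rfl hne

/-! ### Walks from a centre into a component -/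

lemma star_walk {G : SimpleGraph V} {X : Set V} {u w' : V}
    (hy0 : ∃ y ∈ compOut G X w', G.Adj u y) :
    ∀ y ∈ compOut G X w', ∃ p : G.Walk u y, ∀ z ∈ p.support, z = u ∨ z ∈ compOut G X w' := by
  obtain ⟨y0, hy0P, hy0adj⟩ := hy0
  intro y hy
  have hyw' : compOut G X y0 = compOut G X w' := compOut_eq_of_mem hy0P
  obtain ⟨q, hq⟩ := compOut_walk_in (show y ∈ compOut G X y0 by rw [hyw']; exact hy)
  refine ⟨Walk.cons hy0adj q, ?_⟩
  intro z hz'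
  rw [Walk.support_cons] at hz'
  rcases List.mem_cons.mp hz' with rfl | hz'
  · exact Or.inl rfl
  · exact Or.inr (hyw' ▸ hq z hz')

/-! ### Construction A : one component seeing three independent vertices, plus an
outside vertex `x` non-adjacent to the component -/

lemma constructA {G : SimpleGraph V} {X : Set V} {v1 v2 v3 x w : V}
    (hv1 : v1 ∈ X) (hv2 : v2 ∈ X) (hv3 : v3 ∈ X)
    (h12 : v1 ≠ v2) (h13 : v1 ≠ v3) (h23 : v2 ≠ v3)
    (hn12 : ¬ G.Adj v1 v2) (hn13 : ¬ G.Adj v1 v3) (hn23 : ¬ G.Adj v2 v3)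
    (hw : w ∉ X)
    (hC1 : ∃ y ∈ compOut G X w, G.Adj v1 y)
    (hC2 : ∃ y ∈ compOut G X w, G.Adj v2 y)
    (hC3 : ∃ y ∈ compOut G X w, G.Adj v3 y)
    (hxX : x ∈ X) (hx1 : x ≠ v1) (hx2 : x ≠ v2) (hx3 : x ≠ v3)
    (hxC : ∀ y ∈ compOut G X w, ¬ G.Adj x y)
    (hp1 : G.Adj x v1 ∨ ∃ w', w' ∉ X ∧ (∃ y ∈ compOut G X w', G.Adj x y) ∧
      (∃ z ∈ compOut G X w', G.Adj v1 z))
    (hp2 : G.Adj x v2 ∨ ∃ w', w' ∉ X ∧ (∃ y ∈ compOut G X w', G.Adj x y) ∧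
      (∃ z ∈ compOut G X w', G.Adj v2 z))
    (hp3 : G.Adj x v3 ∨ ∃ w', w' ∉ X ∧ (∃ y ∈ compOut G X w', G.Adj x y) ∧
      (∃ z ∈ compOut G X w', G.Adj v3 z)) :
    G.HasInducedMinor (K2q 3) := by
  -- build the patch sets
  have mk : ∀ u : V, (G.Adj x u ∨ ∃ w', w' ∉ X ∧ (∃ y ∈ compOut G X w', G.Adj x y) ∧
      (∃ z ∈ compOut G X w', G.Adj u z)) →
      ∃ P : Set V,
        (∀ y ∈ P, y ∉ X) ∧
        (∀ y ∈ P, ∃ p : G.Walk x y, ∀ z ∈ p.support, z = x ∨ z ∈ P) ∧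
        (∀ y ∈ P, (∀ c ∈ compOut G X w, ¬ G.Adj y c) ∧ y ∉ compOut G X w) ∧
        (G.Adj x u ∨ ∃ z ∈ P, G.Adj u z) := by
    intro u hu
    rcases hu with h | ⟨w', hw'X, hxy0, hz⟩
    · exact ⟨∅, by simp, by simp, by simp, Or.inl h⟩
    · obtain ⟨y0, hy0P, hy0adj⟩ := hxy0
      refine ⟨compOut G X w', fun y hy => compOut_not_mem_X hy,
        star_walk ⟨y0, hy0P, hy0adj⟩, ?_, Or.inr hz⟩
      intro y hy
      constructor
      · intro c hc hadj
        have hEq : compOut G X w' = compOut G X w := compOut_eq_of_adj hy hc hadj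
        exact hxC y0 (hEq ▸ hy0P) hy0adj
      · intro hyC
        have hEq : compOut G X w' = compOut G X w := by
          rw [← compOut_eq_of_mem hy, compOut_eq_of_mem hyC]
        exact hxC y0 (hEq ▸ hy0P) hy0adj
  obtain ⟨P1, hP1X, hP1walk, hP1C, hP1adj⟩ := mk v1 hp1
  obtain ⟨P2, hP2X, hP2walk, hP2C, hP2adj⟩ := mk v2 hp2
  obtain ⟨P3, hP3X, hP3walk, hP3C, hP3adj⟩ := mk v3 hp3
  set L2 : Set V := insert x (P1 ∪ P2 ∪ P3) with hL2def
  have hL2X : ∀ y ∈ L2, y = x ∨ y ∉ X := by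
    intro y hy
    rcases Set.mem_insert_iff.mp hy with rfl | hy
    · exact Or.inl rfl
    · rcases hy with (hy | hy) | hy
      exacts [Or.inr (hP1X y hy), Or.inr (hP2X y hy), Or.inr (hP3X y hy)]
  have hL2conn : (G.induce L2).Connected := by
    apply induce_connected_of_center (c := x) (Set.mem_insert _ _)
    intro y hy
    rcases Set.mem_insert_iff.mp hy with rfl | hy
    · exact ⟨Walk.nil, by simp [hL2def]⟩
    · have key : ∀ (P : Set V), P ⊆ P1 ∪ P2 ∪ P3 →
          (∃ p : G.Walk x y, ∀ z ∈ p.support, z = x ∨ z ∈ P) →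
          ∃ p : G.Walk x y, ∀ z ∈ p.support, z ∈ L2 := by
        rintro P hsub ⟨p, hp⟩
        refine ⟨p, fun z hz => ?_⟩
        rcases hp z hz with rfl | hzP
        · exact Set.mem_insert _ _
        · exact Set.mem_insert_iff.mpr (Or.inr (hsub hzP))
      rcases hy with (hy | hy) | hy
      · exact key P1 (fun z hz => Or.inl (Or.inl hz)) (hP1walk y hy)
      · exact key P2 (fun z hz => Or.inl (Or.inr hz)) (hP2walk y hy)
      · exact key P3 (fun z hz => Or.inr hz) (hP3walk y hy)
  -- disjointness and non-adjacency facts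
  have hCX : ∀ y ∈ compOut G X w, y ∉ X := fun y hy => compOut_not_mem_X hy
  have hL2C : ∀ y ∈ L2, y ∉ compOut G X w := by
    intro y hy
    rcases Set.mem_insert_iff.mp hy with rfl | hy
    · exact fun hc => hCX y hc hxX
    · rcases hy with (hy | hy) | hy
      exacts [(hP1C y hy).2, (hP2C y hy).2, (hP3C y hy).2]
  have hL2nC : ∀ a ∈ compOut G X w, ∀ b ∈ L2, ¬ G.Adj a b := by
    intro a ha b hb hadj
    rcases Set.mem_insert_iff.mp hb with rfl | hb
    · exact hxC a ha hadj.symm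
    · rcases hb with (hb | hb) | hb
      exacts [(hP1C b hb).1 a ha hadj.symm, (hP2C b hb).1 a ha hadj.symm,
        (hP3C b hb).1 a ha hadj.symm]
  have hviL2 : ∀ v' : V, v' ∈ X → v' ≠ x → v' ∉ L2 := by
    intro v' hv' hvx hmem
    rcases hL2X v' hmem with rfl | h
    · exact hvx rfl
    · exact h hv'
  apply hasInducedMinor_K23 (L1 := compOut G X w) (L2 := L2)
    (R1 := {v1}) (R2 := {v2}) (R3 := {v3})
    (compOut_connected hw) hL2conn (induce_singleton_connected G v1)
    (induce_singleton_connected G v2) (induce_singleton_connected G v3)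
  · exact Set.disjoint_left.mpr (fun a ha hb => hL2C a hb ha)
  · exact Set.disjoint_right.mpr (fun a ha => by
      rcases Set.mem_singleton_iff.mp ha with rfl
      exact fun hc => hCX a hc hv1)
  · exact Set.disjoint_right.mpr (fun a ha => by
      rcases Set.mem_singleton_iff.mp ha with rfl
      exact fun hc => hCX a hc hv2)
  · exact Set.disjoint_right.mpr (fun a ha => by
      rcases Set.mem_singleton_iff.mp ha with rfl
      exact fun hc => hCX a hc hv3)
  · exact Set.disjoint_right.mpr (fun a ha => by
      rcases Set.mem_singleton_iff.mp ha with rfl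
      exact hviL2 a hv1 (fun h => hx1 h.symm))
  · exact Set.disjoint_right.mpr (fun a ha => by
      rcases Set.mem_singleton_iff.mp ha with rfl
      exact hviL2 a hv2 (fun h => hx2 h.symm))
  · exact Set.disjoint_right.mpr (fun a ha => by
      rcases Set.mem_singleton_iff.mp ha with rfl
      exact hviL2 a hv3 (fun h => hx3 h.symm))
  · exact Set.disjoint_left.mpr (fun a ha hb => by
      rcases Set.mem_singleton_iff.mp ha with rfl
      exact h12 (Set.mem_singleton_iff.mp hb))
  · exact Set.disjoint_left.mpr (fun a ha hb => by
      rcases Set.mem_singleton_iff.mp ha with rfl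
      exact h13 (Set.mem_singleton_iff.mp hb))
  · exact Set.disjoint_left.mpr (fun a ha hb => by
      rcases Set.mem_singleton_iff.mp ha with rfl
      exact h23 (Set.mem_singleton_iff.mp hb))
  · rintro ⟨a, ha, b, hb, hadj⟩
    exact hL2nC a ha b hb hadj
  · rintro ⟨a, ha, b, hb, hadj⟩
    rcases Set.mem_singleton_iff.mp ha with rfl
    rcases Set.mem_singleton_iff.mp hb with rfl
    exact hn12 hadj
  · rintro ⟨a, ha, b, hb, hadj⟩
    rcases Set.mem_singleton_iff.mp ha with rfl
    rcases Set.mem_singleton_iff.mp hb with rfl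
    exact hn13 hadj
  · rintro ⟨a, ha, b, hb, hadj⟩
    rcases Set.mem_singleton_iff.mp ha with rfl
    rcases Set.mem_singleton_iff.mp hb with rfl
    exact hn23 hadj
  · obtain ⟨y, hy, hadj⟩ := hC1
    exact ⟨y, hy, v1, rfl, hadj.symm⟩
  · obtain ⟨y, hy, hadj⟩ := hC2
    exact ⟨y, hy, v2, rfl, hadj.symm⟩
  · obtain ⟨y, hy, hadj⟩ := hC3
    exact ⟨y, hy, v3, rfl, hadj.symm⟩
  · rcases hP1adj with h | ⟨z, hz, hadj⟩
    · exact ⟨x, Set.mem_insert _ _, v1, rfl, h⟩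
    · exact ⟨z, Set.mem_insert_iff.mpr (Or.inr (Or.inl (Or.inl hz))), v1, rfl, hadj.symm⟩
  · rcases hP2adj with h | ⟨z, hz, hadj⟩
    · exact ⟨x, Set.mem_insert _ _, v2, rfl, h⟩
    · exact ⟨z, Set.mem_insert_iff.mpr (Or.inr (Or.inl (Or.inr hz))), v2, rfl, hadj.symm⟩
  · rcases hP3adj with h | ⟨z, hz, hadj⟩
    · exact ⟨x, Set.mem_insert _ _, v3, rfl, h⟩
    · exact ⟨z, Set.mem_insert_iff.mpr (Or.inr (Or.inr hz)), v3, rfl, hadj.symm⟩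

/-! ### Construction B : five pairwise-distinct components joining pairs -/

lemma constructB {G : SimpleGraph V} {X : Set V} {v1 v2 v3 v4 : V}
    {w12 w13 w23 w14 w24 : V}
    (hv1 : v1 ∈ X) (hv2 : v2 ∈ X) (hv3 : v3 ∈ X) (hv4 : v4 ∈ X)
    (h12 : v1 ≠ v2) (h13 : v1 ≠ v3) (h14 : v1 ≠ v4)
    (h23 : v2 ≠ v3) (h24 : v2 ≠ v4) (h34 : v3 ≠ v4)
    (hn12 : ¬ G.Adj v1 v2) (hn34 : ¬ G.Adj v3 v4)
    (hw12 : w12 ∉ X)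
    (ha12_1 : ∃ y ∈ compOut G X w12, G.Adj v1 y)
    (ha12_2 : ∃ y ∈ compOut G X w12, G.Adj v2 y)
    (ha13_1 : ∃ y ∈ compOut G X w13, G.Adj v1 y)
    (ha13_3 : ∃ y ∈ compOut G X w13, G.Adj v3 y)
    (ha23_2 : ∃ y ∈ compOut G X w23, G.Adj v2 y)
    (ha23_3 : ∃ y ∈ compOut G X w23, G.Adj v3 y)
    (ha14_1 : ∃ y ∈ compOut G X w14, G.Adj v1 y)
    (ha14_4 : ∃ y ∈ compOut G X w14, G.Adj v4 y)
    (ha24_2 : ∃ y ∈ compOut G X w24, G.Adj v2 y)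
    (ha24_4 : ∃ y ∈ compOut G X w24, G.Adj v4 y)
    (hn12_3 : ∀ y ∈ compOut G X w12, ¬ G.Adj v3 y)
    (hn12_4 : ∀ y ∈ compOut G X w12, ¬ G.Adj v4 y)
    (hn13_4 : ∀ y ∈ compOut G X w13, ¬ G.Adj v4 y)
    (hn23_4 : ∀ y ∈ compOut G X w23, ¬ G.Adj v4 y)
    (hn14_3 : ∀ y ∈ compOut G X w14, ¬ G.Adj v3 y)
    (hn24_3 : ∀ y ∈ compOut G X w24, ¬ G.Adj v3 y) :
    G.HasInducedMinor (K2q 3) := by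
  have hdist : ∀ (wa wb v' : V), (∃ y ∈ compOut G X wa, G.Adj v' y) →
      (∀ y ∈ compOut G X wb, ¬ G.Adj v' y) →
      ∀ a ∈ compOut G X wa, ∀ b ∈ compOut G X wb, ¬ G.Adj a b ∧ a ∉ compOut G X wb := by
    rintro wa wb v' ⟨y, hy, hyadj⟩ hnone a ha b hb
    constructor
    · intro hadj
      have hEq : compOut G X wa = compOut G X wb := compOut_eq_of_adj ha hb hadj
      exact hnone y (hEq ▸ hy) hyadj
    · intro hab
      have hEq : compOut G X wa = compOut G X wb := by
        rw [← compOut_eq_of_mem ha, compOut_eq_of_mem hab]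
      exact hnone y (hEq ▸ hy) hyadj
  have hCX : ∀ (w' : V), ∀ y ∈ compOut G X w', y ∉ X := fun w' y hy => compOut_not_mem_X hy
  set R2 : Set V := insert v3 (compOut G X w13 ∪ compOut G X w23) with hR2def
  set R3 : Set V := insert v4 (compOut G X w14 ∪ compOut G X w24) with hR3def
  have hR2conn : (G.induce R2).Connected := by
    apply induce_connected_of_center (c := v3) (Set.mem_insert _ _)
    intro y hy
    rcases Set.mem_insert_iff.mp hy with rfl | hy
    · exact ⟨Walk.nil, by simp [hR2def]⟩
    rcases hy with hy | hy
    · obtain ⟨p, hp⟩ := star_walk ha13_3 y hy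
      refine ⟨p, fun z hz => ?_⟩
      rcases hp z hz with rfl | hz'
      · exact Set.mem_insert _ _
      · exact Set.mem_insert_iff.mpr (Or.inr (Or.inl hz'))
    · obtain ⟨p, hp⟩ := star_walk ha23_3 y hy
      refine ⟨p, fun z hz => ?_⟩
      rcases hp z hz with rfl | hz'
      · exact Set.mem_insert _ _
      · exact Set.mem_insert_iff.mpr (Or.inr (Or.inr hz'))
  have hR3conn : (G.induce R3).Connected := by
    apply induce_connected_of_center (c := v4) (Set.mem_insert _ _)
    intro y hy
    rcases Set.mem_insert_iff.mp hy with rfl | hy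
    · exact ⟨Walk.nil, by simp [hR3def]⟩
    rcases hy with hy | hy
    · obtain ⟨p, hp⟩ := star_walk ha14_4 y hy
      refine ⟨p, fun z hz => ?_⟩
      rcases hp z hz with rfl | hz'
      · exact Set.mem_insert _ _
      · exact Set.mem_insert_iff.mpr (Or.inr (Or.inl hz'))
    · obtain ⟨p, hp⟩ := star_walk ha24_4 y hy
      refine ⟨p, fun z hz => ?_⟩
      rcases hp z hz with rfl | hz'
      · exact Set.mem_insert _ _
      · exact Set.mem_insert_iff.mpr (Or.inr (Or.inr hz'))
  apply hasInducedMinor_K23 (L1 := {v1}) (L2 := {v2}) (R1 := compOut G X w12)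
    (R2 := R2) (R3 := R3)
    (induce_singleton_connected G v1) (induce_singleton_connected G v2)
    (compOut_connected hw12) hR2conn hR3conn
  · exact Set.disjoint_left.mpr (fun a ha hb => by
      rcases Set.mem_singleton_iff.mp ha with rfl
      exact h12 (Set.mem_singleton_iff.mp hb))
  · exact Set.disjoint_left.mpr (fun a ha hb => by
      rcases Set.mem_singleton_iff.mp ha with rfl
      exact hCX w12 a hb hv1)
  · exact Set.disjoint_left.mpr (fun a ha hb => by
      rcases Set.mem_singleton_iff.mp ha with rfl
      rcases Set.mem_insert_iff.mp hb with h | h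
      · exact h13 h
      · rcases h with h | h
        exacts [hCX w13 a h hv1, hCX w23 a h hv1])
  · exact Set.disjoint_left.mpr (fun a ha hb => by
      rcases Set.mem_singleton_iff.mp ha with rfl
      rcases Set.mem_insert_iff.mp hb with h | h
      · exact h14 h
      · rcases h with h | h
        exacts [hCX w14 a h hv1, hCX w24 a h hv1])
  · exact Set.disjoint_left.mpr (fun a ha hb => by
      rcases Set.mem_singleton_iff.mp ha with rfl
      exact hCX w12 a hb hv2)
  · exact Set.disjoint_left.mpr (fun a ha hb => by
      rcases Set.mem_singleton_iff.mp ha with rfl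
      rcases Set.mem_insert_iff.mp hb with h | h
      · exact h23 h
      · rcases h with h | h
        exacts [hCX w13 a h hv2, hCX w23 a h hv2])
  · exact Set.disjoint_left.mpr (fun a ha hb => by
      rcases Set.mem_singleton_iff.mp ha with rfl
      rcases Set.mem_insert_iff.mp hb with h | h
      · exact h24 h
      · rcases h with h | h
        exacts [hCX w14 a h hv2, hCX w24 a h hv2])
  · -- R1 vs R2
    exact Set.disjoint_left.mpr (fun a ha hb => by
      rcases Set.mem_insert_iff.mp hb with h | h
      · exact hCX w12 a ha (h ▸ hv3)
      · rcases h with h | h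
        · exact (hdist w13 w12 v3 ha13_3 hn12_3 a h a ha).2 ha
        · exact (hdist w23 w12 v3 ha23_3 hn12_3 a h a ha).2 ha)
  · -- R1 vs R3
    exact Set.disjoint_left.mpr (fun a ha hb => by
      rcases Set.mem_insert_iff.mp hb with h | h
      · exact hCX w12 a ha (h ▸ hv4)
      · rcases h with h | h
        · exact (hdist w14 w12 v4 ha14_4 hn12_4 a h a ha).2 ha
        · exact (hdist w24 w12 v4 ha24_4 hn12_4 a h a ha).2 ha)
  · -- R2 vs R3
    exact Set.disjoint_left.mpr (fun a ha hb => by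
      rcases Set.mem_insert_iff.mp ha with rfl | ha'
      · rcases Set.mem_insert_iff.mp hb with h | h
        · exact h34 h
        · rcases h with h | h
          exacts [hCX w14 a h hv3, hCX w24 a h hv3]
      · rcases Set.mem_insert_iff.mp hb with h | h
        · rcases ha' with ha' | ha'
          exacts [hCX w13 a ha' (h ▸ hv4), hCX w23 a ha' (h ▸ hv4)]
        · rcases ha' with ha' | ha' <;> rcases h with h | h
          · exact (hdist w13 w14 v3 ha13_3 hn14_3 a ha' a h).2 h
          · exact (hdist w13 w24 v3 ha13_3 hn24_3 a ha' a h).2 h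
          · exact (hdist w23 w14 v3 ha23_3 hn14_3 a ha' a h).2 h
          · exact (hdist w23 w24 v3 ha23_3 hn24_3 a ha' a h).2 h)
  · rintro ⟨a, ha, b, hb, hadj⟩
    rcases Set.mem_singleton_iff.mp ha with rfl
    rcases Set.mem_singleton_iff.mp hb with rfl
    exact hn12 hadj
  · -- no edge R1 - R2
    rintro ⟨a, ha, b, hb, hadj⟩
    rcases Set.mem_insert_iff.mp hb with rfl | hb'
    · exact hn12_3 a ha hadj.symm
    · rcases hb' with hb' | hb'
      · exact (hdist w13 w12 v3 ha13_3 hn12_3 b hb' a ha).1 hadj.symm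
      · exact (hdist w23 w12 v3 ha23_3 hn12_3 b hb' a ha).1 hadj.symm
  · -- no edge R1 - R3
    rintro ⟨a, ha, b, hb, hadj⟩
    rcases Set.mem_insert_iff.mp hb with rfl | hb'
    · exact hn12_4 a ha hadj.symm
    · rcases hb' with hb' | hb'
      · exact (hdist w14 w12 v4 ha14_4 hn12_4 b hb' a ha).1 hadj.symm
      · exact (hdist w24 w12 v4 ha24_4 hn12_4 b hb' a ha).1 hadj.symm
  · -- no edge R2 - R3
    rintro ⟨a, ha, b, hb, hadj⟩
    rcases Set.mem_insert_iff.mp ha with rfl | ha'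
    · rcases Set.mem_insert_iff.mp hb with rfl | hb'
      · exact hn34 hadj
      · rcases hb' with hb' | hb'
        exacts [hn14_3 b hb' hadj, hn24_3 b hb' hadj]
    · rcases Set.mem_insert_iff.mp hb with rfl | hb'
      · rcases ha' with ha' | ha'
        exacts [hn13_4 a ha' hadj.symm, hn23_4 a ha' hadj.symm]
      · rcases ha' with ha' | ha' <;> rcases hb' with hb' | hb'
        · exact (hdist w13 w14 v3 ha13_3 hn14_3 a ha' b hb').1 hadj
        · exact (hdist w13 w24 v3 ha13_3 hn24_3 a ha' b hb').1 hadj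
        · exact (hdist w23 w14 v3 ha23_3 hn14_3 a ha' b hb').1 hadj
        · exact (hdist w23 w24 v3 ha23_3 hn24_3 a ha' b hb').1 hadj
  · obtain ⟨y, hy, hadj⟩ := ha12_1
    exact ⟨v1, rfl, y, hy, hadj⟩
  · obtain ⟨y, hy, hadj⟩ := ha13_1
    exact ⟨v1, rfl, y, Set.mem_insert_iff.mpr (Or.inr (Or.inl hy)), hadj⟩
  · obtain ⟨y, hy, hadj⟩ := ha14_1
    exact ⟨v1, rfl, y, Set.mem_insert_iff.mpr (Or.inr (Or.inl hy)), hadj⟩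
  · obtain ⟨y, hy, hadj⟩ := ha12_2
    exact ⟨v2, rfl, y, hy, hadj⟩
  · obtain ⟨y, hy, hadj⟩ := ha23_2
    exact ⟨v2, rfl, y, Set.mem_insert_iff.mpr (Or.inr (Or.inr hy)), hadj⟩
  · obtain ⟨y, hy, hadj⟩ := ha24_2
    exact ⟨v2, rfl, y, Set.mem_insert_iff.mpr (Or.inr (Or.inr hy)), hadj⟩

/-! ### The core argument for a potential maximal clique -/

lemma pmc_core {G : SimpleGraph V} [Fintype V] (hG : ¬ G.HasInducedMinor (K2q 3))
    {X : Set V} (hpmc : G.IsPotentialMaxClique X) {a b c d : V}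
    (ha : a ∈ X) (hb : b ∈ X) (hc : c ∈ X) (hd : d ∈ X)
    (hab : a ≠ b) (hac : a ≠ c) (had : a ≠ d) (hbc : b ≠ c) (hbd : b ≠ d) (hcd : c ≠ d)
    (nab : ¬ G.Adj a b) (nac : ¬ G.Adj a c) (nad : ¬ G.Adj a d)
    (nbc : ¬ G.Adj b c) (nbd : ¬ G.Adj b d) (ncd : ¬ G.Adj c d) : False := by
  obtain ⟨H, hmin, hXcl, hXmax⟩ := hpmc
  have caseA : ∀ u1 u2 u3 u4 : V, u1 ∈ X → u2 ∈ X → u3 ∈ X → u4 ∈ X →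
      u1 ≠ u2 → u1 ≠ u3 → u1 ≠ u4 → u2 ≠ u3 → u2 ≠ u4 → u3 ≠ u4 →
      ¬ G.Adj u1 u2 → ¬ G.Adj u1 u3 → ¬ G.Adj u1 u4 →
      ¬ G.Adj u2 u3 → ¬ G.Adj u2 u4 → ¬ G.Adj u3 u4 →
      ∀ w, w ∉ X → (∃ y ∈ compOut G X w, G.Adj u1 y) →
        (∃ y ∈ compOut G X w, G.Adj u2 y) → (∃ y ∈ compOut G X w, G.Adj u3 y) → False := by
    intro u1 u2 u3 u4 hu1 hu2 hu3 hu4 h12 h13 h14 h23 h24 h34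
      n12 n13 n14 n23 n24 n34 w hw s1 s2 s3
    by_cases s4 : ∃ y ∈ compOut G X w, G.Adj u4 y
    · obtain ⟨x, hxX, hxC⟩ := exists_nonneighbor hmin hXcl hXmax hw
      have hxne : ∀ u' : V, (∃ y ∈ compOut G X w, G.Adj u' y) → x ≠ u' := by
        rintro u' ⟨y, hy, hadj⟩ rfl
        exact hxC y hy hadj
      have patch : ∀ u' : V, u' ∈ X → x ≠ u' → (G.Adj x u' ∨ ∃ w', w' ∉ X ∧
          (∃ y ∈ compOut G X w', G.Adj x y) ∧ (∃ z ∈ compOut G X w', G.Adj u' z)) := by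
        intro u' hu' hxu
        by_cases hadj : G.Adj x u'
        · exact Or.inl hadj
        · exact Or.inr (cliquish hmin hXcl hxX hu' hxu hadj)
      exact hG (constructA hu1 hu2 hu3 h12 h13 h23 n12 n13 n23 hw s1 s2 s3 hxX
        (hxne u1 s1) (hxne u2 s2) (hxne u3 s3) hxC
        (patch u1 hu1 (hxne u1 s1)) (patch u2 hu2 (hxne u2 s2)) (patch u3 hu3 (hxne u3 s3)))
    · push_neg at s4
      exact hG (constructA hu1 hu2 hu3 h12 h13 h23 n12 n13 n23 hw s1 s2 s3 hu4
        h14.symm h24.symm h34.symm s4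
        (Or.inr (cliquish hmin hXcl hu4 hu1 h14.symm (fun h => n14 h.symm)))
        (Or.inr (cliquish hmin hXcl hu4 hu2 h24.symm (fun h => n24 h.symm)))
        (Or.inr (cliquish hmin hXcl hu4 hu3 h34.symm (fun h => n34 h.symm))))
  by_cases hA : ∃ w, w ∉ X ∧
      (((∃ y ∈ compOut G X w, G.Adj a y) ∧ (∃ y ∈ compOut G X w, G.Adj b y) ∧
        (∃ y ∈ compOut G X w, G.Adj c y)) ∨
       ((∃ y ∈ compOut G X w, G.Adj a y) ∧ (∃ y ∈ compOut G X w, G.Adj b y) ∧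
        (∃ y ∈ compOut G X w, G.Adj d y)) ∨
       ((∃ y ∈ compOut G X w, G.Adj a y) ∧ (∃ y ∈ compOut G X w, G.Adj c y) ∧
        (∃ y ∈ compOut G X w, G.Adj d y)) ∨
       ((∃ y ∈ compOut G X w, G.Adj b y) ∧ (∃ y ∈ compOut G X w, G.Adj c y) ∧
        (∃ y ∈ compOut G X w, G.Adj d y)))
  · obtain ⟨w, hw, htr⟩ := hA
    rcases htr with ⟨sa, sb, sc⟩ | ⟨sa, sb, sd⟩ | ⟨sa, sc, sd⟩ | ⟨sb, sc, sd⟩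
    · exact caseA a b c d ha hb hc hd hab hac had hbc hbd hcd
        nab nac nad nbc nbd ncd w hw sa sb sc
    · exact caseA a b d c ha hb hd hc hab had hac hbd hbc (fun h => hcd h.symm)
        nab nad nac nbd nbc (fun h => ncd h.symm) w hw sa sb sd
    · exact caseA a c d b ha hc hd hb hac had hab hcd (fun h => hbc h.symm)
        (fun h => hbd h.symm) nac nad nab ncd (fun h => nbc h.symm)
        (fun h => nbd h.symm) w hw sa sc sd
    · exact caseA b c d a hb hc hd ha hbc hbd (fun h => hab h.symm) hcd
        (fun h => hac h.symm) (fun h => had h.symm) nbc nbd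
        (fun h => nab h.symm) ncd (fun h => nac h.symm) (fun h => nad h.symm) w hw sb sc sd
  · have hno := fun w hw hdis => hA ⟨w, hw, hdis⟩
    obtain ⟨w12, hw12, s12a, s12b⟩ := cliquish hmin hXcl ha hb hab nab
    obtain ⟨w13, hw13, s13a, s13c⟩ := cliquish hmin hXcl ha hc hac nac
    obtain ⟨w23, hw23, s23b, s23c⟩ := cliquish hmin hXcl hb hc hbc nbc
    obtain ⟨w14, hw14, s14a, s14d⟩ := cliquish hmin hXcl ha hd had nad
    obtain ⟨w24, hw24, s24b, s24d⟩ := cliquish hmin hXcl hb hd hbd nbd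
    have hn12_c : ∀ y ∈ compOut G X w12, ¬ G.Adj c y := fun y hy hadj =>
      hno w12 hw12 (Or.inl ⟨s12a, s12b, ⟨y, hy, hadj⟩⟩)
    have hn12_d : ∀ y ∈ compOut G X w12, ¬ G.Adj d y := fun y hy hadj =>
      hno w12 hw12 (Or.inr (Or.inl ⟨s12a, s12b, ⟨y, hy, hadj⟩⟩))
    have hn13_d : ∀ y ∈ compOut G X w13, ¬ G.Adj d y := fun y hy hadj =>
      hno w13 hw13 (Or.inr (Or.inr (Or.inl ⟨s13a, s13c, ⟨y, hy, hadj⟩⟩)))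
    have hn23_d : ∀ y ∈ compOut G X w23, ¬ G.Adj d y := fun y hy hadj =>
      hno w23 hw23 (Or.inr (Or.inr (Or.inr ⟨s23b, s23c, ⟨y, hy, hadj⟩⟩)))
    have hn14_c : ∀ y ∈ compOut G X w14, ¬ G.Adj c y := fun y hy hadj =>
      hno w14 hw14 (Or.inr (Or.inr (Or.inl ⟨s14a, ⟨y, hy, hadj⟩, s14d⟩)))
    have hn24_c : ∀ y ∈ compOut G X w24, ¬ G.Adj c y := fun y hy hadj =>
      hno w24 hw24 (Or.inr (Or.inr (Or.inr ⟨s24b, ⟨y, hy, hadj⟩, s24d⟩)))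
    exact hG (constructB ha hb hc hd hab hac had hbc hbd hcd nab ncd hw12
      s12a s12b s13a s13c s23b s23c s14a s14d s24b s24d
      hn12_c hn12_d hn13_d hn23_d hn14_c hn24_c)

end K23Aux

/-- If `G` is `K_{2,3}`-induced-minor-free, then `α_pmc(G) ≤ 3`. -/
theorem pmcIndepNum_le_three_of_k23_inducedMinorFree
    {V : Type} [Fintype V] (G : SimpleGraph V)
    (hG : ¬ G.HasInducedMinor (K2q 3)) :
    G.pmcIndepNum ≤ 3 := by
  classical
  have key : ∀ n ∈ {n : ℕ | ∃ X : Set V, G.IsPotentialMaxClique X ∧ n = G.indepNumOn X},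
      n ≤ 3 := by
    rintro n ⟨Xs, hpmc, rfl⟩
    have key2 : ∀ m ∈ {k : ℕ | ∃ s : Finset V, ↑s ⊆ Xs ∧
        (∀ u ∈ s, ∀ v ∈ s, u ≠ v → ¬ G.Adj u v) ∧ s.card = k}, m ≤ 3 := by
      rintro m ⟨s, hsub, hind, rfl⟩
      by_contra hcard
      push_neg at hcard
      obtain ⟨t, hts, ht4⟩ := Finset.exists_subset_card_eq (show 4 ≤ s.card by omega)
      have htne : t.Nonempty := by
        rw [← Finset.card_pos, ht4]
        omega
      obtain ⟨a, hat⟩ := htne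
      have h3 : (t.erase a).card = 3 := by rw [Finset.card_erase_of_mem hat, ht4]
      obtain ⟨b, c, d, hbc, hbd, hcd, hbcd⟩ := Finset.card_eq_three.mp h3
      have hb' : b ∈ t.erase a := by rw [hbcd]; simp
      have hc' : c ∈ t.erase a := by rw [hbcd]; simp
      have hd' : d ∈ t.erase a := by rw [hbcd]; simp
      have hab : a ≠ b := fun h => (Finset.mem_erase.mp hb').1 h.symm
      have hac : a ≠ c := fun h => (Finset.mem_erase.mp hc').1 h.symm
      have had : a ≠ d := fun h => (Finset.mem_erase.mp hd').1 h.symm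
      have has : a ∈ s := hts hat
      have hbs : b ∈ s := hts (Finset.mem_erase.mp hb').2
      have hcs : c ∈ s := hts (Finset.mem_erase.mp hc').2
      have hds : d ∈ s := hts (Finset.mem_erase.mp hd').2
      exact K23Aux.pmc_core hG hpmc (hsub has) (hsub hbs) (hsub hcs) (hsub hds)
        hab hac had hbc hbd hcd
        (hind a has b hbs hab) (hind a has c hcs hac) (hind a has d hds had)
        (hind b hbs c hcs hbc) (hind b hbs d hds hbd) (hind c hcs d hds hcd)
    exact csSup_le' key2
  exact csSup_le' key
end
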